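/- arXiv:1010.1751 — 4 statements merged into one kernel-verified Lean document; each statement's English description precedes it below -/
import Mathlib

section
/- Let u = e₁ be the first standard basis vector of ℝ⁶ and v = δ₁e₆. Then u ≥ 0, v ≥ 0, v = θ + Ru and u·v = 0. Consequently, the pair (y,z) defined by y(t) = t·u and z(t) = t·v is a fluid path associated with (θ,R), i.e., z(t) = z(0) + θt + Ry(t) for all t ≥ 0, y is continuous and nondecreasing with y(0) = 0, each coordinate y_k increases only at times t at which z_k(t) = 0, and z(t) ∈ ℝ₊⁶ for all t ≥ 0; moreover this fluid path is divergent, i.e., |z(t)| = Σᵢ|zᵢ(t)| → ∞ as t → ∞. -/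
open MeasureTheory ProbabilityTheory
open scoped ENNReal NNReal

noncomputable section

/-- The conditions imposed on the constants `δ₁, δ₂, δ₃, δ₄`. -/
def DeltaCond (δ₁ δ₂ δ₃ δ₄ : ℝ) : Prop :=
  0 < δ₁ ∧ 0 < δ₂ ∧ 0 < δ₃ ∧ 0 < δ₄ ∧
    δ₂ + δ₃ ≤ δ₄ / 6 ∧ δ₁ ≤ δ₃ ∧ δ₃ ≤ 1 / 10 ∧ δ₄ < 1

/-- The reflection matrix `R = J₁ + J₂` of the paper. -/
def Rmat (δ₁ δ₂ δ₃ δ₄ : ℝ) : Matrix (Fin 6) (Fin 6) ℝ :=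
  !![1, 1 + δ₂, 1 + δ₂, 1 + δ₂, 1 + δ₂, 1 - δ₄;
     1, 1, 1 - δ₃, 1 - δ₃, 1 - δ₃, 1 - δ₃;
     1, 1 - δ₃, 1, 1 - δ₃, 1 - δ₃, 1 - δ₃;
     1, 1 - δ₃, 1 - δ₃, 1, 1 - δ₃, 1 - δ₃;
     1, 1 - δ₃, 1 - δ₃, 1 - δ₃, 1, 1 - δ₃;
     1 + δ₁, 1 - δ₃, 1 - δ₃, 1 - δ₃, 1 - δ₃, 1]

/-- A standard one-dimensional Brownian motion started at `0`: continuous paths,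
measurable marginals, independent increments, and Gaussian increments with
variance equal to the elapsed time. -/
def IsStdBM {Ω : Type} [MeasurableSpace Ω] (P : Measure Ω) (B : ℝ → Ω → ℝ) : Prop :=
  (∀ t, Measurable fun ω => B t ω) ∧
  (∀ ω, Continuous fun t => B t ω) ∧
  (∀ ω, B 0 ω = 0) ∧
  (∀ (n : ℕ) (t : ℕ → ℝ), Monotone t → (∀ i, 0 ≤ t i) →
      iIndepFun
        (fun i : Fin n => fun ω => B (t (i.1 + 1)) ω - B (t i.1) ω) P) ∧
  (∀ s t : ℝ, 0 ≤ s → s ≤ t →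
      P.map (fun ω => B t ω - B s ω) = gaussianReal 0 (Real.toNNReal (t - s)))

/-- An SRBM solution `(Z, Y, B)` with data `(θ, I, R)`, where `θ = (-1,…,-1)` and
`R = Rmat δ₁ δ₂ δ₃ δ₄`:  `B` consists of six independent standard Brownian motions,
`Z` and `Y` are continuous adapted processes satisfying, almost surely, the SRBM
equation, the monotonicity and reflection conditions on `Y`, and nonnegativity of
`Z`. -/
def IsSRBM (δ₁ δ₂ δ₃ δ₄ : ℝ) {Ω : Type} [MeasurableSpace Ω] (P : Measure Ω)
    (B Z Y : Fin 6 → ℝ → Ω → ℝ) : Prop :=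
  (∀ k, IsStdBM P (B k)) ∧
  iIndepFun (fun (k : Fin 6) ω => fun t : ℝ => B k t ω) P ∧
  (∀ k t, Measurable fun ω => Z k t ω) ∧
  (∀ k t, Measurable fun ω => Y k t ω) ∧
  (∀ k ω, Continuous fun t => Z k t ω) ∧
  (∀ k ω, Continuous fun t => Y k t ω) ∧
  (∀ᵐ ω ∂P,
    (∀ t, 0 ≤ t → ∀ k, Z k t ω =
        Z k 0 ω + B k t ω + (-1) * t + ∑ j, Rmat δ₁ δ₂ δ₃ δ₄ k j * Y j t ω) ∧
    (∀ k, Y k 0 ω = 0) ∧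
    (∀ k, MonotoneOn (fun t => Y k t ω) (Set.Ici (0 : ℝ))) ∧
    (∀ k t₁ t₂, 0 ≤ t₁ → t₁ < t₂ → Y k t₁ ω < Y k t₂ ω →
        ∃ s, t₁ ≤ s ∧ s ≤ t₂ ∧ Z k s ω = 0) ∧
    (∀ k t, 0 ≤ t → 0 ≤ Z k t ω))

/-- Running maximum `max_{0 ≤ s ≤ t} f(s)`. -/
def runMax (f : ℝ → ℝ) (t : ℝ) : ℝ := sSup (f '' Set.Icc 0 t)

/-- The hitting time `inf {t ≥ 0 : pred t}`, with `inf ∅ = ∞`. -/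
def hitTime (pred : ℝ → Prop) : ℝ≥0∞ :=
  sInf {s : ℝ≥0∞ | ∃ t : ℝ, 0 ≤ t ∧ pred t ∧ s = ENNReal.ofReal t}

lemma cons_val_five {α : Type*} {n : ℕ} (x : α)
    (u : Fin (n+5) → α) : Matrix.vecCons x u 5 = u 4 := rfl

/-- The pair `(u,v) = (e₁, δ₁ e₆)` solves the linear complementarity problem, the
corresponding linear pair `(y,z)` is a fluid path associated with `(θ, R)`, and this
fluid path is divergent. -/
theorem stmt_0 (δ₁ δ₂ δ₃ δ₄ : ℝ) (hδ : DeltaCond δ₁ δ₂ δ₃ δ₄)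
    (θ u v : Fin 6 → ℝ) (y z : ℝ → Fin 6 → ℝ)
    (hθ : θ = fun _ => -1)
    (hu : u = fun i => if i = 0 then 1 else 0)
    (hv : v = fun i => if i = 5 then δ₁ else 0)
    (hy : y = fun t i => t * u i)
    (hz : z = fun t i => t * v i) :
    (∀ i, 0 ≤ u i) ∧ (∀ i, 0 ≤ v i) ∧
    (∀ i, v i = θ i + ∑ j, Rmat δ₁ δ₂ δ₃ δ₄ i j * u j) ∧
    (∑ i, u i * v i) = 0 ∧
    (∀ t : ℝ, 0 ≤ t → ∀ i, z t i = z 0 i + θ i * t + ∑ j, Rmat δ₁ δ₂ δ₃ δ₄ i j * y t j) ∧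
    (∀ i, Continuous fun t => y t i) ∧
    (∀ i, MonotoneOn (fun t => y t i) (Set.Ici (0 : ℝ))) ∧
    (∀ i, y 0 i = 0) ∧
    (∀ i (t₁ t₂ : ℝ), 0 ≤ t₁ → t₁ < t₂ → y t₁ i < y t₂ i →
        ∃ s, t₁ ≤ s ∧ s ≤ t₂ ∧ z s i = 0) ∧
    (∀ t : ℝ, 0 ≤ t → ∀ i, 0 ≤ z t i) ∧
    Filter.Tendsto (fun t => ∑ i, |z t i|) Filter.atTop Filter.atTop := by
  obtain ⟨h1, h2, h3, h4, h5, h6, h7, h8⟩ := hδ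
  subst hθ hu hv hy hz
  refine ⟨?_, ?_, ?_, ?_, ?_, ?_, ?_, ?_, ?_, ?_, ?_⟩
  · intro i; dsimp only; split <;> norm_num
  · intro i; dsimp only; split
    · exact h1.le
    · exact le_rfl
  · intro i; fin_cases i <;> simp [Rmat, Fin.sum_univ_six, cons_val_five] <;> ring
  · simp [Fin.sum_univ_six]
  · intro t ht i
    fin_cases i <;> simp [Rmat, Fin.sum_univ_six, cons_val_five] <;> ring
  · intro i
    exact (continuous_id.mul continuous_const)
  · intro i t₁ ht₁ t₂ ht₂ h
    by_cases hi : i = 0 <;> simp [hi, h]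
  · intro i; simp
  · intro i t₁ t₂ ht₁ h12 hy
    refine ⟨t₁, le_refl _, h12.le, ?_⟩
    have hi : i = 0 := by
      by_contra hne
      simp [hne] at hy
    subst hi
    simp
  · intro t ht i
    fin_cases i <;> simp <;> positivity
  · have : ∀ t : ℝ, 0 ≤ t → (∑ i : Fin 6, |t * (if i = 5 then δ₁ else 0)|) = δ₁ * t := by
      intro t ht
      simp [Fin.sum_univ_six, abs_of_nonneg (mul_nonneg ht h1.le), mul_comm]
      rw [abs_of_pos h1, abs_of_nonneg ht]
    refine Filter.Tendsto.congr' ?_ (Filter.tendsto_atTop_atTop_of_monotone (fun a b hab => mul_le_mul_of_nonneg_left hab h1.le : Monotone fun t => δ₁ * t) (fun b => ⟨b / δ₁ + 1, by rw [mul_add, mul_div_cancel₀ _ h1.ne', mul_one]; linarith⟩))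
    filter_upwards [Filter.eventually_ge_atTop 0] with t ht
    exact (this t ht).symm
end
end

section
/- Let B be a standard one-dimensional Brownian motion with B(0) = 0. For each ε > 0 there exist constants C₁ > 0 and ε' > 0 such that: (i) for every u ≥ 0, P(inf_{t≥0} (εt + u − |B(t)|) ≤ 0) ≤ C₁e^{−ε'u}; and (ii) for every u > 0 and every t ≥ 0, P(min_{0≤s≤s'≤t} (ε(s'−s) + u − |B(s') − B(s)|) ≤ 0) ≤ C₁(t+1)e^{−ε'u}. -/
open MeasureTheory ProbabilityTheory
open scoped ENNReal NNReal

noncomputable section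

section BMAux
open Real

lemma gauss_one_side (v : ℝ≥0) (hv : v ≠ 0) (y : ℝ) (hy : 0 ≤ y) :
    gaussianReal 0 v (Set.Ici y) ≤ ENNReal.ofReal (Real.exp (-y^2/(2*v))) := by
  have hv' : (0:ℝ) < (v:ℝ) := by positivity
  rw [gaussianReal_apply_eq_integral 0 hv]
  apply ENNReal.ofReal_le_ofReal
  have h1 : ∀ x ∈ Set.Ici y, gaussianPDFReal 0 v x ≤
      Real.exp (-y^2/(2*v)) * gaussianPDFReal y v x := by
    intro x hx
    simp only [Set.mem_Ici] at hx
    unfold gaussianPDFReal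
    have key : Real.exp (-(x-0)^2/(2*v)) ≤
        Real.exp (-y^2/(2*v)) * Real.exp (-(x-y)^2/(2*v)) := by
      rw [← Real.exp_add]
      apply Real.exp_le_exp.mpr
      rw [← add_div, div_le_div_iff₀ (by positivity) (by positivity)]
      nlinarith [mul_nonneg hy (sub_nonneg.mpr hx)]
    have hc : (0:ℝ) ≤ (Real.sqrt (2 * π * (v:ℝ)))⁻¹ := by positivity
    nlinarith [mul_le_mul_of_nonneg_left key hc]
  calc ∫ x in Set.Ici y, gaussianPDFReal 0 v x
      ≤ ∫ x in Set.Ici y, Real.exp (-y^2/(2*v)) * gaussianPDFReal y v x := by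
        apply setIntegral_mono_on
        · exact (integrable_gaussianPDFReal 0 v).integrableOn
        · exact ((integrable_gaussianPDFReal y v).const_mul _).integrableOn
        · exact measurableSet_Ici
        · exact h1
    _ = Real.exp (-y^2/(2*v)) * ∫ x in Set.Ici y, gaussianPDFReal y v x := by
        rw [integral_const_mul]
    _ ≤ Real.exp (-y^2/(2*v)) * ∫ x, gaussianPDFReal y v x := by
        apply mul_le_mul_of_nonneg_left _ (Real.exp_nonneg _)
        apply setIntegral_le_integral (integrable_gaussianPDFReal y v)
        exact Filter.Eventually.of_forall (gaussianPDFReal_nonneg y v)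
    _ = Real.exp (-y^2/(2*v)) := by rw [integral_gaussianPDFReal_eq_one y hv, mul_one]

lemma gauss_abs (v : ℝ≥0) (hv : v ≠ 0) (y : ℝ) (hy : 0 ≤ y) :
    gaussianReal 0 v {x : ℝ | y < |x|} ≤ ENNReal.ofReal (2 * Real.exp (-y^2/(2*v))) := by
  have hsub : {x : ℝ | y < |x|} ⊆ Set.Ici y ∪ ((fun x : ℝ => -x) ⁻¹' Set.Ici y) := by
    intro x hx
    simp only [Set.mem_setOf_eq] at hx
    rcases abs_cases x with ⟨h1, _⟩ | ⟨h1, _⟩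
    · left; simp only [Set.mem_Ici]; linarith
    · right; simp only [Set.mem_preimage, Set.mem_Ici]; linarith
  have hmap : gaussianReal 0 v ((fun x : ℝ => -x) ⁻¹' Set.Ici y) =
      gaussianReal 0 v (Set.Ici y) := by
    have h := gaussianReal_map_const_mul (μ := 0) (v := v) (-1)
    norm_num at h
    rw [← Measure.map_apply measurable_neg measurableSet_Ici, h]
  calc gaussianReal 0 v {x : ℝ | y < |x|}
      ≤ gaussianReal 0 v (Set.Ici y) + gaussianReal 0 v ((fun x : ℝ => -x) ⁻¹' Set.Ici y) :=
        le_trans (measure_mono hsub) (measure_union_le _ _)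
    _ ≤ ENNReal.ofReal (Real.exp (-y^2/(2*v))) + ENNReal.ofReal (Real.exp (-y^2/(2*v))) := by
        rw [hmap]
        exact add_le_add (gauss_one_side v hv y hy) (gauss_one_side v hv y hy)
    _ = ENNReal.ofReal (2 * Real.exp (-y^2/(2*v))) := by
        rw [← ENNReal.ofReal_add (Real.exp_nonneg _) (Real.exp_nonneg _)]; ring_nf

section BM
variable {Ω : Type} [MeasurableSpace Ω] (P : Measure Ω) (B : ℝ → Ω → ℝ)

lemma inc_tail (hB : IsStdBM P B) (s t : ℝ) (hs : 0 ≤ s) (hst : s < t) (y : ℝ) (hy : 0 ≤ y) :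
    P {ω | y < |B t ω - B s ω|} ≤ ENNReal.ofReal (2 * Real.exp (-y^2/(2*(t-s)))) := by
  have hmeas : Measurable (fun ω => B t ω - B s ω) := (hB.1 t).sub (hB.1 s)
  have hset : MeasurableSet {x : ℝ | y < |x|} := by
    have : {x : ℝ | y < |x|} = (fun x : ℝ => |x|) ⁻¹' Set.Ioi y := rfl
    rw [this]; exact measurable_abs measurableSet_Ioi
  have h1 : {ω | y < |B t ω - B s ω|} = (fun ω => B t ω - B s ω) ⁻¹' {x : ℝ | y < |x|} := rfl
  rw [h1, ← Measure.map_apply hmeas hset, hB.2.2.2.2 s t hs hst.le]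
  have hv : Real.toNNReal (t - s) ≠ 0 := by
    simp only [ne_eq, Real.toNNReal_eq_zero, not_le]; linarith
  have hcoe : ((Real.toNNReal (t - s)) : ℝ) = t - s := Real.coe_toNNReal _ (by linarith)
  calc gaussianReal 0 (Real.toNNReal (t - s)) {x : ℝ | y < |x|}
      ≤ ENNReal.ofReal (2 * Real.exp (-y^2/(2*(Real.toNNReal (t - s) : ℝ)))) :=
        gauss_abs _ hv y hy
    _ = ENNReal.ofReal (2 * Real.exp (-y^2/(2*(t-s)))) := by rw [hcoe]

end BM

lemma dyadic_key (g : ℝ → ℝ) (hg0 : g 0 = 0) (x : ℝ) (hx : 0 ≤ x)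
    (h : ∀ k : ℕ, ∀ j : ℕ, j < 2^(k+1) →
      |g ((j+1 : ℕ)/2^(k+1)) - g ((j : ℕ)/2^(k+1))| ≤ x/6 * (3/4)^(k+1)) :
    ∀ K : ℕ, ∀ j : ℕ, j ≤ 2^(K+1) → |g ((j : ℕ)/2^(K+1))| ≤ x * (1 - (3/4)^(K+1)) := by
  intro K
  induction K with
  | zero =>
    intro j hj
    interval_cases j
    · norm_num [hg0]; positivity
    · have h0 := h 0 0 (by norm_num)
      norm_num [hg0] at h0 ⊢
      linarith
    · have h0 := h 0 0 (by norm_num)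
      have h1 := h 0 1 (by norm_num)
      norm_num [hg0] at h0 h1 ⊢
      have tri : |g 1| ≤ |g 1 - g (1/2)| + |g (1/2)| := by
        have := abs_add_le (g 1 - g (1/2)) (g (1/2)); simpa using this
      linarith
  | succ K ih =>
    intro j hj
    have hpow : (2:ℕ)^(K+1+1) = 2 * 2^(K+1) := by ring
    rcases Nat.even_or_odd j with ⟨m, hm⟩ | ⟨m, hm⟩
    · have hm' : m ≤ 2^(K+1) := by omega
      have hc : ((j : ℕ):ℝ)/2^(K+1+1) = ((m : ℕ):ℝ)/2^(K+1) := by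
        subst hm; push_cast; ring
      rw [hc]
      refine le_trans (ih m hm') ?_
      have h2 := pow_nonneg (by norm_num : (0:ℝ) ≤ 3/4) (K+1)
      have hps : (3/4:ℝ)^(K+1+1) = (3/4)^(K+1) * (3/4) := pow_succ _ _
      nlinarith
    · have hm2 : 2*m < 2^(K+1+1) := by omega
      have hmle : m ≤ 2^(K+1) := by omega
      have hinc := h (K+1) (2*m) hm2
      have ihm := ih m hmle
      have hc : ((2*m+1 : ℕ):ℝ)/2^(K+1+1) = ((j : ℕ):ℝ)/2^(K+1+1) := by
        subst hm; push_cast; ring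
      have hc2 : ((2*m : ℕ):ℝ)/2^(K+1+1) = ((m : ℕ):ℝ)/2^(K+1) := by
        push_cast; ring
      rw [hc, hc2] at hinc
      have tri : |g ((j:ℝ)/2^(K+1+1))| ≤
          |g ((j:ℝ)/2^(K+1+1)) - g ((m:ℝ)/2^(K+1))| + |g ((m:ℝ)/2^(K+1))| := by
        have := abs_add_le (g ((j:ℝ)/2^(K+1+1)) - g ((m:ℝ)/2^(K+1))) (g ((m:ℝ)/2^(K+1)))
        simpa using this
      have h2 := pow_nonneg (by norm_num : (0:ℝ) ≤ 3/4) (K+1)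
      have hmul := mul_nonneg hx h2
      have hps : (3/4:ℝ)^(K+1+1) = (3/4)^(K+1) * (3/4) := pow_succ _ _
      nlinarith [tri, hinc, ihm]

lemma dyadic_bound (g : ℝ → ℝ) (hg : Continuous g) (hg0 : g 0 = 0) (x : ℝ) (hx : 0 ≤ x)
    (h : ∀ k : ℕ, ∀ j : ℕ, j < 2^(k+1) →
      |g ((j+1 : ℕ)/2^(k+1)) - g ((j : ℕ)/2^(k+1))| ≤ x/6 * (3/4)^(k+1)) :
    ∀ t : ℝ, 0 ≤ t → t ≤ 1 → |g t| ≤ x := by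
  intro t ht0 ht1
  set seq : ℕ → ℝ := fun n => ((⌊2^(n+1) * t⌋₊ : ℕ) : ℝ)/2^(n+1) with hseqdef
  have hfl : ∀ n : ℕ, (⌊2^(n+1) * t⌋₊ : ℕ) ≤ 2^(n+1) := by
    intro n
    have h1 : (2:ℝ)^(n+1) * t ≤ ((2^(n+1) : ℕ) : ℝ) := by
      push_cast
      nlinarith [pow_pos (by norm_num : (0:ℝ) < 2) (n+1)]
    calc ⌊2^(n+1) * t⌋₊ ≤ ⌊((2^(n+1) : ℕ) : ℝ)⌋₊ := Nat.floor_le_floor h1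
      _ = 2^(n+1) := Nat.floor_natCast _
  have hbd : ∀ n : ℕ, |g (seq n)| ≤ x := by
    intro n
    refine le_trans (dyadic_key g hg0 x hx h n _ (hfl n)) ?_
    nlinarith [pow_nonneg (by norm_num : (0:ℝ) ≤ 3/4) (n+1), hx]
  have hseq_le : ∀ n : ℕ, seq n ≤ t := by
    intro n
    have := Nat.floor_le (by positivity : (0:ℝ) ≤ 2^(n+1) * t)
    rw [hseqdef]
    have hp : (0:ℝ) < 2^(n+1) := by positivity
    rw [div_le_iff₀ hp]
    linarith
  have hseq_ge : ∀ n : ℕ, t - (1/2)^n ≤ seq n := by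
    intro n
    have hlt := Nat.lt_floor_add_one (2^(n+1) * t)
    have hp : (0:ℝ) < 2^(n+1) := by positivity
    rw [hseqdef]
    rw [le_div_iff₀ hp]
    have : (1/2:ℝ)^n * 2^(n+1) = 2 := by
      rw [div_pow, one_pow, pow_succ]
      field_simp
    nlinarith
  have htend : Filter.Tendsto seq Filter.atTop (nhds t) := by
    have hlow : Filter.Tendsto (fun n : ℕ => t - (1/2)^n) Filter.atTop (nhds (t - 0)) :=
      Filter.Tendsto.const_sub t
        (tendsto_pow_atTop_nhds_zero_of_lt_one (by norm_num) (by norm_num))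
    rw [sub_zero] at hlow
    exact tendsto_of_tendsto_of_tendsto_of_le_of_le hlow tendsto_const_nhds hseq_ge hseq_le
  have habs : Filter.Tendsto (fun n => |g (seq n)|) Filter.atTop (nhds |g t|) :=
    ((hg.tendsto t).comp htend).abs
  exact le_of_tendsto habs (Filter.Eventually.of_forall hbd)

lemma exponent_eq (x : ℝ) (m : ℕ) :
    -(x/6*(3/4:ℝ)^m)^2/(2*(1/2^m)) = -(x^2/72)*(9/8)^m := by
  have e1 : ((3/4:ℝ)^m)^2 = (9/16)^m := by
    rw [← pow_mul, mul_comm, pow_mul]; norm_num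
  have e2 : ((9/16:ℝ))^m * 2^m = (9/8)^m := by rw [← mul_pow]; norm_num
  have h1 : -(x/6*(3/4:ℝ)^m)^2/(2*(1/2^m)) = -(x^2/72)*(((3/4:ℝ)^m)^2 * 2^m) := by
    have h2m : (2:ℝ)^m ≠ 0 := by positivity
    field_simp
    ring
  rw [h1, e1, e2]

lemma perk_bound (x : ℝ) (hx : 30 ≤ x) (m : ℕ) :
    (2:ℝ)^m * (2*Real.exp (-(x^2/72)*(9/8)^m)) ≤ 2*Real.exp (-x^2/72) * (1/2)^m := by
  have hB : (1:ℝ) + m*(1/8) ≤ (9/8)^m := by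
    have := one_add_mul_le_pow (a := (1/8:ℝ)) (by norm_num) m
    norm_num at this ⊢
    linarith
  have key : (4:ℝ)^m * Real.exp (-(x^2/72)*(9/8)^m) ≤ Real.exp (-x^2/72) := by
    have h4 : (4:ℝ)^m = Real.exp (m * Real.log 4) := by
      rw [Real.exp_nat_mul, Real.exp_log (by norm_num)]
    rw [h4, ← Real.exp_add]
    apply Real.exp_le_exp.mpr
    have hm0 : (0:ℝ) ≤ (m:ℝ) := Nat.cast_nonneg m
    have hx2 : (900:ℝ) ≤ x^2 := by nlinarith
    have hlog : Real.log 4 ≤ 1.39 := by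
      rw [show (4:ℝ) = 2^2 by norm_num, Real.log_pow]
      push_cast
      nlinarith [Real.log_two_lt_d9]
    have h98 : (m:ℝ)/8 ≤ (9/8)^m - 1 := by linarith
    have hh : (900/72:ℝ) * ((m:ℝ)/8) ≤ (x^2/72) * ((9/8)^m - 1) := by
      apply mul_le_mul (by linarith) h98 (by positivity) (by positivity)
    nlinarith [mul_le_mul_of_nonneg_left hlog hm0]
  have hp : (0:ℝ) < 2^m := by positivity
  have h4m : (2:ℝ)^m * 2^m = 4^m := by rw [← mul_pow]; norm_num
  have hhalf : (1/2:ℝ)^m * 2^m = 1 := by rw [← mul_pow]; norm_num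
  apply le_of_mul_le_mul_right _ hp
  have h5 : (2:ℝ)^m * (2*Real.exp (-(x^2/72)*(9/8)^m)) * 2^m
      = 2*((4:ℝ)^m * Real.exp (-(x^2/72)*(9/8)^m)) := by
    linear_combination 2*Real.exp (-(x^2/72)*(9/8)^m)*h4m
  have h6 : 2*Real.exp (-x^2/72)*(1/2)^m*2^m = 2*Real.exp (-x^2/72) := by
    linear_combination 2*Real.exp (-x^2/72)*hhalf
  rw [h5, h6]
  linarith

section OSC
variable {Ω : Type} [MeasurableSpace Ω] (P : Measure Ω) [IsProbabilityMeasure P] (B : ℝ → Ω → ℝ)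

lemma osc_tail (hB : IsStdBM P B) (a : ℝ) (ha : 0 ≤ a) (x : ℝ) (hx : 0 ≤ x) :
    P {ω | ∃ s, a ≤ s ∧ s ≤ a+1 ∧ x < |B s ω - B a ω|} ≤
      ENNReal.ofReal (Real.exp 13 * Real.exp (-x^2/72)) := by
  rcases lt_or_ge x 30 with hx30 | hx30
  · calc P {ω | ∃ s, a ≤ s ∧ s ≤ a+1 ∧ x < |B s ω - B a ω|} ≤ 1 := prob_le_one
      _ = ENNReal.ofReal 1 := ENNReal.ofReal_one.symm
      _ ≤ ENNReal.ofReal (Real.exp 13 * Real.exp (-x^2/72)) := by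
          apply ENNReal.ofReal_le_ofReal
          rw [← Real.exp_add]
          apply Real.one_le_exp
          nlinarith
  · have hxpos : 0 < x := by linarith
    set D : ℕ → ℕ → Set Ω := fun k j =>
      {ω | x/6*(3/4:ℝ)^(k+1) < |B (a + ((j+1:ℕ):ℝ)/2^(k+1)) ω - B (a + ((j:ℕ):ℝ)/2^(k+1)) ω|}
      with hD
    have hsub : {ω | ∃ s, a ≤ s ∧ s ≤ a+1 ∧ x < |B s ω - B a ω|} ⊆
        ⋃ k : ℕ, ⋃ j ∈ Finset.range (2^(k+1)), D k j := by
      intro ω hω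
      by_contra hc
      simp only [Set.mem_iUnion, not_exists] at hc
      have hno : ∀ k j : ℕ, j < 2^(k+1) →
          |B (a + ((j+1:ℕ):ℝ)/2^(k+1)) ω - B (a + ((j:ℕ):ℝ)/2^(k+1)) ω| ≤ x/6*(3/4:ℝ)^(k+1) := by
        intro k j hj
        by_contra hgt
        push_neg at hgt
        exact hc k j (Finset.mem_range.mpr hj) hgt
      obtain ⟨s, hs1, hs2, hs3⟩ := hω
      have hgcont : Continuous (fun t : ℝ => B (a + t) ω - B a ω) :=
        ((hB.2.1 ω).comp (continuous_const.add continuous_id)).sub continuous_const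
      have hg0 : B (a + 0) ω - B a ω = 0 := by rw [add_zero, sub_self]
      have hdy := dyadic_bound (fun t : ℝ => B (a + t) ω - B a ω) hgcont hg0 x hx ?_ (s - a)
        (by linarith) (by linarith)
      · simp only [add_sub_cancel] at hdy
        linarith [hdy, hs3]
      · intro k j hj
        have hcan : (fun t : ℝ => B (a + t) ω - B a ω) (((j+1:ℕ):ℝ)/2^(k+1))
            - (fun t : ℝ => B (a + t) ω - B a ω) (((j:ℕ):ℝ)/2^(k+1))
            = B (a + ((j+1:ℕ):ℝ)/2^(k+1)) ω - B (a + ((j:ℕ):ℝ)/2^(k+1)) ω := by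
          simp only [sub_sub_sub_cancel_right]
        rw [hcan]
        exact hno k j hj
    have hDk : ∀ k j : ℕ, P (D k j) ≤
        ENNReal.ofReal (2 * Real.exp (-(x^2/72)*(9/8:ℝ)^(k+1))) := by
      intro k j
      have hs0 : (0:ℝ) ≤ a + ((j:ℕ):ℝ)/2^(k+1) := by positivity
      have hstep : a + ((j:ℕ):ℝ)/2^(k+1) < a + ((j+1:ℕ):ℝ)/2^(k+1) := by
        have hp : (0:ℝ) < 2^(k+1) := by positivity
        have hj : ((j:ℕ):ℝ) < ((j+1:ℕ):ℝ) := by push_cast; linarith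
        have := div_lt_div_of_pos_right hj hp
        linarith
      have hy : (0:ℝ) ≤ x/6*(3/4:ℝ)^(k+1) := by positivity
      have := inc_tail P B hB _ _ hs0 hstep _ hy
      refine le_trans this (le_of_eq ?_)
      congr 1
      have hdiff : (a + ((j+1:ℕ):ℝ)/2^(k+1)) - (a + ((j:ℕ):ℝ)/2^(k+1)) = 1/2^(k+1) := by
        push_cast; ring
      rw [hdiff, exponent_eq]
    calc P {ω | ∃ s, a ≤ s ∧ s ≤ a+1 ∧ x < |B s ω - B a ω|}
        ≤ P (⋃ k : ℕ, ⋃ j ∈ Finset.range (2^(k+1)), D k j) := measure_mono hsub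
      _ ≤ ∑' k : ℕ, P (⋃ j ∈ Finset.range (2^(k+1)), D k j) := measure_iUnion_le _
      _ ≤ ∑' k : ℕ, ENNReal.ofReal (2*Real.exp (-x^2/72) * (1/2)^(k+1)) := by
          apply ENNReal.tsum_le_tsum
          intro k
          calc P (⋃ j ∈ Finset.range (2^(k+1)), D k j)
              ≤ ∑ j ∈ Finset.range (2^(k+1)), P (D k j) := measure_biUnion_finset_le _ _
            _ ≤ ∑ j ∈ Finset.range (2^(k+1)),
                  ENNReal.ofReal (2 * Real.exp (-(x^2/72)*(9/8:ℝ)^(k+1))) :=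
                Finset.sum_le_sum (fun j _ => hDk k j)
            _ = (2^(k+1) : ℕ) * ENNReal.ofReal (2 * Real.exp (-(x^2/72)*(9/8:ℝ)^(k+1))) := by
                rw [Finset.sum_const, Finset.card_range, nsmul_eq_mul]
            _ = ENNReal.ofReal ((2:ℝ)^(k+1) * (2 * Real.exp (-(x^2/72)*(9/8:ℝ)^(k+1)))) := by
                have hnat : ((2^(k+1) : ℕ) : ℝ≥0∞) = ENNReal.ofReal ((2:ℝ)^(k+1)) := by
                  rw [← ENNReal.ofReal_natCast]
                  congr 1
                  push_cast
                  ring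
                rw [hnat, ← ENNReal.ofReal_mul (by positivity)]
            _ ≤ ENNReal.ofReal (2*Real.exp (-x^2/72) * (1/2)^(k+1)) :=
                ENNReal.ofReal_le_ofReal (perk_bound x hx30 (k+1))
      _ = ENNReal.ofReal (2*Real.exp (-x^2/72)) * ∑' k : ℕ, (ENNReal.ofReal (1/2))^(k+1) := by
          rw [← ENNReal.tsum_mul_left]
          congr 1
          ext k
          rw [ENNReal.ofReal_mul (by positivity), ENNReal.ofReal_pow (by norm_num)]
      _ = ENNReal.ofReal (2*Real.exp (-x^2/72)) := by
          have hhalf : ENNReal.ofReal (1/2) = 2⁻¹ := by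
            rw [one_div, ENNReal.ofReal_inv_of_pos (by norm_num)]
            norm_num
          rw [hhalf]
          have : ∑' k : ℕ, (2⁻¹ : ℝ≥0∞)^(k+1) = 1 := by
            simp_rw [pow_succ]
            rw [ENNReal.tsum_mul_right, ENNReal.tsum_geometric, ENNReal.one_sub_inv_two,
              inv_inv]
            exact ENNReal.mul_inv_cancel (by norm_num) (by norm_num)
          rw [this, mul_one]
      _ ≤ ENNReal.ofReal (Real.exp 13 * Real.exp (-x^2/72)) := by
          apply ENNReal.ofReal_le_ofReal
          have h2 : (2:ℝ) ≤ Real.exp 13 := by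
            nlinarith [Real.add_one_le_exp (13:ℝ)]
          nlinarith [Real.exp_nonneg (-x^2/72)]

end OSC

section Master
variable {Ω : Type} [MeasurableSpace Ω] (P : Measure Ω) [IsProbabilityMeasure P] (B : ℝ → Ω → ℝ)

set_option maxHeartbeats 1000000 in
lemma master (hB : IsStdBM P B) (ε : ℝ) (hε : 0 < ε) (j d : ℕ) (u : ℝ) (hu : 0 < u) :
    P {ω | ∃ p : ℝ × ℝ, ((j:ℝ) ≤ p.1 ∧ p.1 ≤ (j:ℝ)+1) ∧
        ((j:ℝ)+(d:ℝ) ≤ p.2 ∧ p.2 ≤ (j:ℝ)+(d:ℝ)+1) ∧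
        p.1 ≤ p.2 ∧ ε*(p.2-p.1)+u < |B p.2 ω - B p.1 ω|} ≤
      ENNReal.ofReal (3 * Real.exp (180 + 2*ε) *
        Real.exp (-(min ε (ε^2/72)) * d) * Real.exp (-(min 1 (ε/36)) * u)) := by
  set c := min ε (ε^2/72) with hc
  set γ := min 1 (ε/36) with hγ
  set w := ε * max ((d:ℝ) - 1) 0 + u with hw
  have hd0 : (0:ℝ) ≤ (d:ℝ) := Nat.cast_nonneg d
  have hwpos : 0 < w := by
    have : (0:ℝ) ≤ ε * max ((d:ℝ) - 1) 0 := mul_nonneg hε.le (le_max_right _ _)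
    linarith
  have hwlb : ε * (d:ℝ) - ε + u ≤ w := by
    have : (d:ℝ) - 1 ≤ max ((d:ℝ) - 1) 0 := le_max_left _ _
    nlinarith
  have hcle : c ≤ ε := min_le_left _ _
  have hγle : γ ≤ 1 := min_le_left _ _
  have hcd : c * d ≤ ε * d := mul_le_mul_of_nonneg_right hcle hd0
  have hγu : γ * u ≤ u := by nlinarith
  set E1 : Set Ω := {ω | ∃ s, (j:ℝ) ≤ s ∧ s ≤ (j:ℝ)+1 ∧ w/3 < |B s ω - B (j:ℝ) ω|} with hE1
  set E3 : Set Ω := {ω | ∃ s, (j:ℝ)+(d:ℝ) ≤ s ∧ s ≤ ((j:ℝ)+(d:ℝ))+1 ∧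
      w/3 < |B s ω - B ((j:ℝ)+(d:ℝ)) ω|} with hE3
  set E2 : Set Ω := {ω | w/3 < |B ((j:ℝ)+(d:ℝ)) ω - B (j:ℝ) ω|} with hE2
  have hsub : {ω | ∃ p : ℝ × ℝ, ((j:ℝ) ≤ p.1 ∧ p.1 ≤ (j:ℝ)+1) ∧
      ((j:ℝ)+(d:ℝ) ≤ p.2 ∧ p.2 ≤ (j:ℝ)+(d:ℝ)+1) ∧
      p.1 ≤ p.2 ∧ ε*(p.2-p.1)+u < |B p.2 ω - B p.1 ω|} ⊆ E1 ∪ (E2 ∪ E3) := by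
    intro ω hω
    obtain ⟨p, ⟨hp11, hp12⟩, ⟨hp21, hp22⟩, hple, hpineq⟩ := hω
    have hwle : w ≤ ε*(p.2-p.1)+u := by
      have hmax : max ((d:ℝ) - 1) 0 ≤ p.2 - p.1 := max_le (by linarith) (by linarith)
      nlinarith
    have tri : |B p.2 ω - B p.1 ω| ≤
        |B p.1 ω - B (j:ℝ) ω| + |B ((j:ℝ)+(d:ℝ)) ω - B (j:ℝ) ω|
          + |B p.2 ω - B ((j:ℝ)+(d:ℝ)) ω| := by
      have habc : B p.2 ω - B p.1 ω = (B p.2 ω - B ((j:ℝ)+(d:ℝ)) ω)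
          + (B ((j:ℝ)+(d:ℝ)) ω - B (j:ℝ) ω) + (B (j:ℝ) ω - B p.1 ω) := by ring
      rw [habc]
      refine le_trans (abs_add_three _ _ _) ?_
      rw [abs_sub_comm (B (j:ℝ) ω) (B p.1 ω)]
      linarith
    rcases lt_or_ge (w/3) (|B p.1 ω - B (j:ℝ) ω|) with h1 | h1
    · exact Or.inl ⟨p.1, hp11, hp12, h1⟩
    rcases lt_or_ge (w/3) (|B ((j:ℝ)+(d:ℝ)) ω - B (j:ℝ) ω|) with h2 | h2
    · exact Or.inr (Or.inl h2)
    have h3 : w/3 < |B p.2 ω - B ((j:ℝ)+(d:ℝ)) ω| := by linarith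
    exact Or.inr (Or.inr ⟨p.2, hp21, hp22, h3⟩)
  have hterm : ENNReal.ofReal (3 * Real.exp (180 + 2*ε) * Real.exp (-c * d)
      * Real.exp (-γ * u)) = ENNReal.ofReal (Real.exp (180 + 2*ε) * Real.exp (-c * d)
      * Real.exp (-γ * u)) + (ENNReal.ofReal (Real.exp (180 + 2*ε) * Real.exp (-c * d)
      * Real.exp (-γ * u)) + ENNReal.ofReal (Real.exp (180 + 2*ε) * Real.exp (-c * d)
      * Real.exp (-γ * u))) := by
    rw [← ENNReal.ofReal_add (by positivity) (by positivity),
      ← ENNReal.ofReal_add (by positivity) (by positivity)]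
    ring_nf
  have hR1 : ∀ a : ℝ, 0 ≤ a → P {ω | ∃ s, a ≤ s ∧ s ≤ a+1 ∧ w/3 < |B s ω - B a ω|} ≤
      ENNReal.ofReal (Real.exp (180 + 2*ε) * Real.exp (-c * d) * Real.exp (-γ * u)) := by
    intro a ha
    refine le_trans (osc_tail P B hB a ha (w/3) (by positivity)) ?_
    apply ENNReal.ofReal_le_ofReal
    rw [← Real.exp_add, ← Real.exp_add, ← Real.exp_add]
    apply Real.exp_le_exp.mpr
    nlinarith [sq_nonneg (w - 324), sq_nonneg w]
  have hR2 : P E2 ≤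
      ENNReal.ofReal (Real.exp (180 + 2*ε) * Real.exp (-c * d) * Real.exp (-γ * u)) := by
    rcases Nat.eq_zero_or_pos d with hd | hd
    · have : E2 = ∅ := by
        subst hd
        ext ω
        simp only [hE2, Nat.cast_zero, add_zero, sub_self, abs_zero, Set.mem_setOf_eq,
          Set.mem_empty_iff_false, iff_false, not_lt]
        positivity
      rw [this]
      simp
    · have hd1 : (1:ℝ) ≤ (d:ℝ) := by exact_mod_cast hd
      have hmax : max ((d:ℝ) - 1) 0 = (d:ℝ) - 1 := max_eq_left (by linarith)
      have hwd : w = ε * ((d:ℝ) - 1) + u := by rw [hw, hmax]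
      have hst : (j:ℝ) < (j:ℝ) + (d:ℝ) := by linarith
      refine le_trans (inc_tail P B hB (j:ℝ) ((j:ℝ)+(d:ℝ)) (Nat.cast_nonneg j) hst (w/3)
        (by positivity)) ?_
      apply ENNReal.ofReal_le_ofReal
      have hdiff : (j:ℝ) + (d:ℝ) - (j:ℝ) = (d:ℝ) := by ring
      rw [hdiff]
      have h2e : (2:ℝ) ≤ Real.exp 1 := by nlinarith [Real.add_one_le_exp (1:ℝ)]
      have hstep : 2 * Real.exp (-(w/3)^2/(2*(d:ℝ))) ≤
          Real.exp (1 + -(w/3)^2/(2*(d:ℝ))) := by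
        rw [Real.exp_add]
        nlinarith [Real.exp_nonneg (-(w/3)^2/(2*(d:ℝ)))]
      refine le_trans hstep ?_
      rw [← Real.exp_add, ← Real.exp_add]
      apply Real.exp_le_exp.mpr
      have hdpos : (0:ℝ) < (d:ℝ) := by linarith
      rcases eq_or_lt_of_le hd1 with hd1' | hd2
      · -- d = 1
        rw [← hd1'] at hwd ⊢
        rw [hwd]
        simp only [sub_self, mul_zero, zero_add, mul_one]
        nlinarith [sq_nonneg (u - 9)]
      · -- d ≥ 2
        have hd2' : (2:ℝ) ≤ (d:ℝ) := by
          have : (1:ℕ) < d := by exact_mod_cast hd2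
          exact_mod_cast this
        have hc2 : c ≤ ε^2/72 := min_le_right _ _
        have hγ2 : γ ≤ ε/36 := min_le_right _ _
        have hkey : c * d + γ * u ≤ (w/3)^2/(2*(d:ℝ)) := by
          rw [le_div_iff₀ (by positivity)]
          have hw2 : ε*(d:ℝ)/2 + u ≤ w := by rw [hwd]; nlinarith
          have hcd' : c * d ≤ ε^2/72 * d := mul_le_mul_of_nonneg_right hc2 hd0
          have hγu' : γ * u ≤ ε/36 * u := mul_le_mul_of_nonneg_right hγ2 hu.le
          have hsum : c * d + γ * u ≤ ε^2/72 * d + ε/36 * u := by linarith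
          have hmul : (c * d + γ * u) * (2*(d:ℝ)) ≤ (ε^2/72 * d + ε/36 * u) * (2*(d:ℝ)) :=
            mul_le_mul_of_nonneg_right hsum (by positivity)
          have hsq : (ε*(d:ℝ)/2 + u)^2 ≤ w^2 := by
            apply pow_le_pow_left₀ (by positivity) hw2
          have hfin : (ε^2/72 * d + ε/36 * u) * (2*(d:ℝ)) ≤ (ε*(d:ℝ)/2 + u)^2/9 := by
            nlinarith [mul_nonneg (mul_nonneg hε.le hd0) hu.le, sq_nonneg u]
          nlinarith [hmul, hfin, hsq]
        have h2' : -((w/3)^2/(2*(d:ℝ))) ≤ -(c * d + γ * u) := neg_le_neg hkey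
        have h3' : -(w/3)^2/(2*(d:ℝ)) = -((w/3)^2/(2*(d:ℝ))) := by ring
        rw [h3']
        linarith
  calc P {ω | ∃ p : ℝ × ℝ, ((j:ℝ) ≤ p.1 ∧ p.1 ≤ (j:ℝ)+1) ∧
        ((j:ℝ)+(d:ℝ) ≤ p.2 ∧ p.2 ≤ (j:ℝ)+(d:ℝ)+1) ∧
        p.1 ≤ p.2 ∧ ε*(p.2-p.1)+u < |B p.2 ω - B p.1 ω|}
      ≤ P E1 + (P E2 + P E3) :=
        le_trans (measure_mono hsub) (le_trans (measure_union_le _ _)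
          (add_le_add le_rfl (measure_union_le _ _)))
    _ ≤ ENNReal.ofReal (3 * Real.exp (180 + 2*ε) * Real.exp (-c * d)
        * Real.exp (-γ * u)) := by
        rw [hterm]
        exact add_le_add (hR1 (j:ℝ) (Nat.cast_nonneg j))
          (add_le_add (hR2) (hR1 ((j:ℝ)+(d:ℝ)) (by positivity)))

end Master

lemma tsum_geo (K c E : ℝ) (hK : 0 ≤ K) (hc : 0 < c) (hE : 0 ≤ E) :
    ∑' d : ℕ, ENNReal.ofReal (K * Real.exp (-c*d) * E) ≤
      ENNReal.ofReal (K*E/(1-Real.exp (-c))) := by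
  have hexp1 : Real.exp (-c) < 1 := by
    rw [Real.exp_lt_one_iff]; linarith
  have hpos : 0 < 1 - Real.exp (-c) := by linarith
  have hterm : ∀ d : ℕ, ENNReal.ofReal (K * Real.exp (-c*d) * E) =
      ENNReal.ofReal (K*E) * (ENNReal.ofReal (Real.exp (-c)))^d := by
    intro d
    have h1 : Real.exp (-c*(d:ℕ)) = (Real.exp (-c))^d := by
      rw [mul_comm, Real.exp_nat_mul]
    rw [h1, ← ENNReal.ofReal_pow (Real.exp_nonneg _), ← ENNReal.ofReal_mul (by positivity)]
    congr 1
    ring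
  calc ∑' d : ℕ, ENNReal.ofReal (K * Real.exp (-c*d) * E)
      = ENNReal.ofReal (K*E) * ∑' d : ℕ, (ENNReal.ofReal (Real.exp (-c)))^d := by
        simp_rw [hterm]
        rw [ENNReal.tsum_mul_left]
    _ = ENNReal.ofReal (K*E) * (1 - ENNReal.ofReal (Real.exp (-c)))⁻¹ := by
        rw [ENNReal.tsum_geometric]
    _ = ENNReal.ofReal (K*E/(1-Real.exp (-c))) := by
        have h2 : (1 : ℝ≥0∞) - ENNReal.ofReal (Real.exp (-c)) =
            ENNReal.ofReal (1 - Real.exp (-c)) := by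
          rw [ENNReal.ofReal_sub _ (Real.exp_nonneg _), ENNReal.ofReal_one]
        rw [h2, ← ENNReal.ofReal_inv_of_pos hpos,
          ← ENNReal.ofReal_mul (by positivity), div_eq_mul_inv]
    _ ≤ ENNReal.ofReal (K*E/(1-Real.exp (-c))) := le_rfl

end BMAux

set_option maxHeartbeats 1000000 in
/-- Exponential bounds for a Brownian motion staying above the moving barrier
`-εt - u`, and for all of its increments staying above `-ε(s'-s) - u` on `[0,t]`. -/
theorem stmt_2 {Ω : Type} [MeasurableSpace Ω] (P : Measure Ω) [IsProbabilityMeasure P]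
    (B : ℝ → Ω → ℝ) (hB : IsStdBM P B) :
    ∀ ε : ℝ, 0 < ε → ∃ C₁ > (0 : ℝ), ∃ ε' > (0 : ℝ),
      (∀ u : ℝ, 0 ≤ u →
        P {ω | sInf ((fun t => ε * t + u - |B t ω|) '' Set.Ici (0 : ℝ)) ≤ 0} ≤
          ENNReal.ofReal (C₁ * Real.exp (-ε' * u))) ∧
      (∀ u t : ℝ, 0 < u → 0 ≤ t →
        P {ω | sInf ((fun p : ℝ × ℝ => ε * (p.2 - p.1) + u - |B p.2 ω - B p.1 ω|) ''
            {p : ℝ × ℝ | 0 ≤ p.1 ∧ p.1 ≤ p.2 ∧ p.2 ≤ t}) ≤ 0} ≤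
          ENNReal.ofReal (C₁ * (t + 1) * Real.exp (-ε' * u))) := by
  intro ε hε
  set c := min ε (ε^2/72) with hc
  set γ := min 1 (ε/36) with hγ
  have hcpos : 0 < c := lt_min hε (by positivity)
  have hγpos : 0 < γ := lt_min one_pos (by positivity)
  set Kc := 3 * Real.exp (180 + 2*ε) with hKc
  have hKcpos : 0 < Kc := by positivity
  have hden : 0 < 1 - Real.exp (-c) := by
    have : Real.exp (-c) < 1 := by rw [Real.exp_lt_one_iff]; linarith
    linarith
  set C₂ := Kc / (1 - Real.exp (-c)) with hC₂
  have hC₂pos : 0 < C₂ := by positivity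
  refine ⟨C₂ + 1, by positivity, γ/2, by positivity, ?_, ?_⟩
  · -- part (i)
    intro u hu
    rcases eq_or_lt_of_le hu with hu0 | hu0
    · -- u = 0
      calc P {ω | sInf ((fun t => ε * t + u - |B t ω|) '' Set.Ici (0 : ℝ)) ≤ 0} ≤ 1 :=
            prob_le_one
        _ ≤ ENNReal.ofReal ((C₂ + 1) * Real.exp (-(γ/2) * u)) := by
            rw [← hu0]
            simp only [mul_zero, neg_zero, Real.exp_zero, mul_one]
            rw [← ENNReal.ofReal_one]
            apply ENNReal.ofReal_le_ofReal
            linarith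
    · -- u > 0
      have hsub : {ω | sInf ((fun t => ε * t + u - |B t ω|) '' Set.Ici (0 : ℝ)) ≤ 0} ⊆
          ⋃ d : ℕ, {ω | ∃ p : ℝ × ℝ, (((0:ℕ):ℝ) ≤ p.1 ∧ p.1 ≤ ((0:ℕ):ℝ)+1) ∧
            (((0:ℕ):ℝ)+(d:ℝ) ≤ p.2 ∧ p.2 ≤ ((0:ℕ):ℝ)+(d:ℝ)+1) ∧
            p.1 ≤ p.2 ∧ ε*(p.2-p.1)+(u/2) < |B p.2 ω - B p.1 ω|} := by
        intro ω hω
        simp only [Set.mem_setOf_eq] at hω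
        have hne : ((fun t => ε * t + u - |B t ω|) '' Set.Ici (0 : ℝ)).Nonempty :=
          ⟨_, Set.mem_image_of_mem _ (Set.self_mem_Ici)⟩
        have hlt : sInf ((fun t => ε * t + u - |B t ω|) '' Set.Ici (0 : ℝ)) < u/2 := by
          linarith
        obtain ⟨y, ⟨t', ht'0, rfl⟩, hy⟩ := exists_lt_of_csInf_lt hne hlt
        simp only [Set.mem_Ici] at ht'0
        rw [Set.mem_iUnion]
        refine ⟨⌊t'⌋₊, ⟨(0, t'), ?_, ?_, ?_, ?_⟩⟩
        · constructor <;> norm_num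
        · constructor
          · push_cast
            simpa using Nat.floor_le ht'0
          · push_cast
            simpa using (Nat.lt_floor_add_one t').le
        · exact ht'0
        · have hB0 : B 0 ω = 0 := hB.2.2.1 ω
          simp only [hB0, sub_zero]
          linarith
      calc P {ω | sInf ((fun t => ε * t + u - |B t ω|) '' Set.Ici (0 : ℝ)) ≤ 0}
          ≤ ∑' d : ℕ, P {ω | ∃ p : ℝ × ℝ, (((0:ℕ):ℝ) ≤ p.1 ∧ p.1 ≤ ((0:ℕ):ℝ)+1) ∧
              (((0:ℕ):ℝ)+(d:ℝ) ≤ p.2 ∧ p.2 ≤ ((0:ℕ):ℝ)+(d:ℝ)+1) ∧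
              p.1 ≤ p.2 ∧ ε*(p.2-p.1)+(u/2) < |B p.2 ω - B p.1 ω|} :=
            le_trans (measure_mono hsub) (measure_iUnion_le _)
        _ ≤ ∑' d : ℕ, ENNReal.ofReal (Kc * Real.exp (-c*d) * Real.exp (-γ*(u/2))) := by
            apply ENNReal.tsum_le_tsum
            intro d
            have := master P B hB ε hε 0 d (u/2) (by linarith)
            refine le_trans this (le_of_eq ?_)
            rw [hKc, hc, hγ]
        _ ≤ ENNReal.ofReal (Kc * Real.exp (-γ*(u/2)) / (1 - Real.exp (-c))) :=
            tsum_geo Kc c _ hKcpos.le hcpos (Real.exp_nonneg _)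
        _ ≤ ENNReal.ofReal ((C₂ + 1) * Real.exp (-(γ/2) * u)) := by
            apply ENNReal.ofReal_le_ofReal
            have hEe : Real.exp (-γ*(u/2)) = Real.exp (-(γ/2) * u) := by
              congr 1; ring
            rw [hEe]
            have hC2b : Kc * Real.exp (-(γ/2)*u) / (1 - Real.exp (-c)) =
                C₂ * Real.exp (-(γ/2)*u) := by rw [hC₂]; ring
            rw [hC2b]
            nlinarith [Real.exp_nonneg (-(γ/2)*u)]
  · -- part (ii)
    intro u t hu ht
    set N := ⌊t⌋₊ with hN
    set G : ℕ → ℕ → Set Ω := fun j d =>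
      {ω | ∃ p : ℝ × ℝ, ((j:ℝ) ≤ p.1 ∧ p.1 ≤ (j:ℝ)+1) ∧
        ((j:ℝ)+(d:ℝ) ≤ p.2 ∧ p.2 ≤ (j:ℝ)+(d:ℝ)+1) ∧
        p.1 ≤ p.2 ∧ ε*(p.2-p.1)+(u/2) < |B p.2 ω - B p.1 ω|} with hG
    have hsub : {ω | sInf ((fun p : ℝ × ℝ => ε * (p.2 - p.1) + u - |B p.2 ω - B p.1 ω|) ''
        {p : ℝ × ℝ | 0 ≤ p.1 ∧ p.1 ≤ p.2 ∧ p.2 ≤ t}) ≤ 0} ⊆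
        ⋃ j : ℕ, ⋃ d : ℕ, (if j ≤ N then G j d else (∅ : Set Ω)) := by
      intro ω hω
      simp only [Set.mem_setOf_eq] at hω
      have hne : ((fun p : ℝ × ℝ => ε * (p.2 - p.1) + u - |B p.2 ω - B p.1 ω|) ''
          {p : ℝ × ℝ | 0 ≤ p.1 ∧ p.1 ≤ p.2 ∧ p.2 ≤ t}).Nonempty := by
        exact ⟨_, Set.mem_image_of_mem _ (by simp [ht] : ((0:ℝ),(0:ℝ)) ∈
          {p : ℝ × ℝ | 0 ≤ p.1 ∧ p.1 ≤ p.2 ∧ p.2 ≤ t})⟩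
      have hlt : sInf ((fun p : ℝ × ℝ => ε * (p.2 - p.1) + u - |B p.2 ω - B p.1 ω|) ''
          {p : ℝ × ℝ | 0 ≤ p.1 ∧ p.1 ≤ p.2 ∧ p.2 ≤ t}) < u/2 := by linarith
      obtain ⟨y, ⟨p, hp, rfl⟩, hy⟩ := exists_lt_of_csInf_lt hne hlt
      obtain ⟨hp0, hp12, hp2t⟩ := hp
      have hp20 : 0 ≤ p.2 := le_trans hp0 hp12
      set j := ⌊p.1⌋₊ with hj
      have hjle : j ≤ ⌊p.2⌋₊ := Nat.floor_le_floor hp12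
      set d := ⌊p.2⌋₊ - j with hd
      have hjd : j + d = ⌊p.2⌋₊ := Nat.add_sub_cancel' hjle
      have hjN : j ≤ N := le_trans hjle (Nat.floor_le_floor hp2t)
      rw [Set.mem_iUnion]
      refine ⟨j, ?_⟩
      rw [Set.mem_iUnion]
      refine ⟨d, ?_⟩
      rw [if_pos hjN]
      refine ⟨p, ⟨Nat.floor_le hp0, (Nat.lt_floor_add_one p.1).le⟩, ⟨?_, ?_⟩, hp12, by linarith⟩
      · have : ((j + d : ℕ):ℝ) ≤ p.2 := by
          rw [hjd]; exact Nat.floor_le hp20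
        push_cast at this
        linarith
      · have : p.2 < ((j + d : ℕ):ℝ) + 1 := by
          rw [hjd]; exact Nat.lt_floor_add_one p.2
        push_cast at this
        linarith
    have hGbd : ∀ j d : ℕ, P (G j d) ≤
        ENNReal.ofReal (Kc * Real.exp (-c*d) * Real.exp (-γ*(u/2))) := by
      intro j d
      have := master P B hB ε hε j d (u/2) (by linarith)
      refine le_trans this (le_of_eq ?_)
      rw [hKc, hc, hγ]
    set Cb := ENNReal.ofReal (Kc * Real.exp (-γ*(u/2)) / (1 - Real.exp (-c))) with hCb
    calc P {ω | sInf ((fun p : ℝ × ℝ => ε * (p.2 - p.1) + u - |B p.2 ω - B p.1 ω|) ''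
          {p : ℝ × ℝ | 0 ≤ p.1 ∧ p.1 ≤ p.2 ∧ p.2 ≤ t}) ≤ 0}
        ≤ ∑' j : ℕ, P (⋃ d : ℕ, (if j ≤ N then G j d else (∅ : Set Ω))) :=
          le_trans (measure_mono hsub) (measure_iUnion_le _)
      _ ≤ ∑' j : ℕ, (if j ≤ N then Cb else 0) := by
          apply ENNReal.tsum_le_tsum
          intro j
          by_cases hjN : j ≤ N
          · simp only [if_pos hjN]
            calc P (⋃ d : ℕ, G j d) ≤ ∑' d : ℕ, P (G j d) := measure_iUnion_le _
              _ ≤ ∑' d : ℕ, ENNReal.ofReal (Kc * Real.exp (-c*d) * Real.exp (-γ*(u/2))) :=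
                  ENNReal.tsum_le_tsum (fun d => hGbd j d)
              _ ≤ Cb := tsum_geo Kc c _ hKcpos.le hcpos (Real.exp_nonneg _)
          · simp only [if_neg hjN]
            simp
      _ = ∑ j ∈ Finset.range (N+1), (if j ≤ N then Cb else 0) := by
          apply tsum_eq_sum
          intro j hj
          rw [if_neg]
          simp only [Finset.mem_range, not_lt] at hj
          omega
      _ = (N+1 : ℕ) * Cb := by
          rw [Finset.sum_congr rfl (fun j hj => if_pos (by
            simp only [Finset.mem_range] at hj; omega))]
          rw [Finset.sum_const, Finset.card_range, nsmul_eq_mul]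
      _ ≤ ENNReal.ofReal ((C₂ + 1) * (t + 1) * Real.exp (-(γ/2) * u)) := by
          rw [hCb]
          have hcast : ((N+1 : ℕ) : ℝ≥0∞) = ENNReal.ofReal ((N:ℝ)+1) := by
            rw [← ENNReal.ofReal_natCast]
            congr 1
            push_cast
            ring
          rw [hcast, ← ENNReal.ofReal_mul (by positivity)]
          apply ENNReal.ofReal_le_ofReal
          have hee : Real.exp (-γ*(u/2)) = Real.exp (-(γ/2) * u) := by ring_nf
          have hNt : (N:ℝ) ≤ t := by
            rw [hN]; exact Nat.floor_le ht
          have hC2b : Kc * Real.exp (-γ*(u/2)) / (1 - Real.exp (-c)) =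
              C₂ * Real.exp (-(γ/2) * u) := by
            rw [hC₂, hee]; ring
          rw [hC2b]
          have he0 : 0 ≤ Real.exp (-(γ/2) * u) := Real.exp_nonneg _
          nlinarith [mul_nonneg hC₂pos.le he0]
end
end

section
/- For every t ≥ 0: (i) for each ℓ = 2,…,5, Σ_{k=1}^{6} y_k(t) ≥ t − z_ℓ(0) − b_ℓ(t); and (ii) for each ℓ = 1,…,6, Σ_{k=1}^{6} y_k(t) ≥ (1/2)(t − z_ℓ(0) − b_ℓ(t)). -/
open MeasureTheory ProbabilityTheory
open scoped ENNReal NNReal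

noncomputable section

lemma Rmat_le_two {δ₁ δ₂ δ₃ δ₄ : ℝ} (hδ : DeltaCond δ₁ δ₂ δ₃ δ₄) (i j : Fin 6) :
    Rmat δ₁ δ₂ δ₃ δ₄ i j ≤ 2 := by
  obtain ⟨h1, h2, h3, h4, h5, h6, h7, h8⟩ := hδ
  fin_cases i <;> fin_cases j <;>
    first
      | (show (1 : ℝ) ≤ 2; norm_num)
      | (show 1 + δ₁ ≤ 2; linarith)
      | (show 1 + δ₂ ≤ 2; linarith)
      | (show 1 - δ₃ ≤ 2; linarith)
      | (show 1 - δ₄ ≤ 2; linarith)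

lemma Rmat_le_one {δ₁ δ₂ δ₃ δ₄ : ℝ} (hδ : DeltaCond δ₁ δ₂ δ₃ δ₄) (i j : Fin 6)
    (hi1 : 1 ≤ i.1) (hi4 : i.1 ≤ 4) : Rmat δ₁ δ₂ δ₃ δ₄ i j ≤ 1 := by
  obtain ⟨h1, h2, h3, h4, h5, h6, h7, h8⟩ := hδ
  fin_cases i <;> simp at hi1 hi4 <;> fin_cases j <;>
    first
      | (show (1 : ℝ) ≤ 1; norm_num)
      | (show 1 - δ₃ ≤ 1; linarith)

/-- Elementary lower bounds on `Σ_k y_k(t)` for a (deterministic) path satisfying the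
SRBM-type equations, in terms of the coordinates `ℓ = 2,…,5` (indices `1,…,4`) and
`ℓ = 1,…,6` respectively. -/
theorem stmt_3 (δ₁ δ₂ δ₃ δ₄ : ℝ) (hδ : DeltaCond δ₁ δ₂ δ₃ δ₄)
    (b y z : Fin 6 → ℝ → ℝ)
    (hbc : ∀ k, Continuous (b k)) (hyc : ∀ k, Continuous (y k))
    (hzc : ∀ k, Continuous (z k))
    (hb0 : ∀ k, b k 0 = 0)
    (heq : ∀ t : ℝ, 0 ≤ t → ∀ k, z k t =
        z k 0 + b k t + (-1) * t + ∑ j, Rmat δ₁ δ₂ δ₃ δ₄ k j * y j t)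
    (hy0 : ∀ k, y k 0 = 0)
    (hymono : ∀ k, MonotoneOn (y k) (Set.Ici (0 : ℝ)))
    (hrefl : ∀ k (t₁ t₂ : ℝ), 0 ≤ t₁ → t₁ < t₂ → y k t₁ < y k t₂ →
        ∃ s, t₁ ≤ s ∧ s ≤ t₂ ∧ z k s = 0)
    (hznn : ∀ k (t : ℝ), 0 ≤ t → 0 ≤ z k t) :
    ∀ t : ℝ, 0 ≤ t →
      (∀ ℓ : Fin 6, 1 ≤ ℓ.1 → ℓ.1 ≤ 4 → t - z ℓ 0 - b ℓ t ≤ ∑ k, y k t) ∧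
      (∀ ℓ : Fin 6, (1 / 2) * (t - z ℓ 0 - b ℓ t) ≤ ∑ k, y k t) := by
  intro t ht
  have hynn : ∀ k, 0 ≤ y k t := fun k => by
    have := (hymono k) (Set.self_mem_Ici) (Set.mem_Ici.mpr ht) ht
    simpa [hy0 k] using this
  have hle : ∀ ℓ : Fin 6, t - z ℓ 0 - b ℓ t ≤ ∑ j, Rmat δ₁ δ₂ δ₃ δ₄ ℓ j * y j t := by
    intro ℓ
    have hz := hznn ℓ t ht
    have he := heq t ht ℓ
    linarith
  constructor
  · intro ℓ hl1 hl4
    have key := hle ℓ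
    have h2 : ∑ j, Rmat δ₁ δ₂ δ₃ δ₄ ℓ j * y j t ≤ ∑ k, y k t := by
      apply Finset.sum_le_sum
      intro j _
      calc Rmat δ₁ δ₂ δ₃ δ₄ ℓ j * y j t ≤ 1 * y j t :=
            mul_le_mul_of_nonneg_right (Rmat_le_one hδ ℓ j hl1 hl4) (hynn j)
        _ = y j t := one_mul _
    linarith
  · intro ℓ
    have key := hle ℓ
    have h2 : ∑ j, Rmat δ₁ δ₂ δ₃ δ₄ ℓ j * y j t ≤ ∑ k, 2 * y k t := by
      apply Finset.sum_le_sum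
      intro j _
      exact mul_le_mul_of_nonneg_right (Rmat_le_two hδ ℓ j) (hynn j)
    rw [← Finset.mul_sum] at h2
    linarith
end
end

section
/- Define N₆(t) = Y₁(t) and N_k(t) = 0 for k ≠ 6. Then: (i) for each given ε > 0 there exist constants C₁ > 0 and ε' > 0 such that, for all t ≥ 0 and k = 2,…,6, P(Y_k(t) + (1−δ₃)Σ_{ℓ=2, ℓ≠k}^{6} Y_ℓ(t) ≥ (1+ε)t + δ₁N_k(t)) ≤ C₁e^{−ε't}; and (ii) there exist constants C₁ > 0 and ε' > 0 such that, for all t ≥ 0 and k = 2,…,6, P(Y_k(t) ≤ t/5 − (1/δ₃)(Z_k(0) + 2Y₁(t))) ≤ C₁e^{−ε't}. -/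
open MeasureTheory ProbabilityTheory
open scoped ENNReal NNReal

noncomputable section

section Stmt8Aux


lemma gaussian_map_neg (v : ℝ≥0) :
    (gaussianReal 0 v).map (fun x => -x) = gaussianReal 0 v := by
  have h := gaussianReal_map_const_mul (μ := 0) (v := v) (-1)
  have h1 : (.mk ((-1 : ℝ)^2) (sq_nonneg _) : ℝ≥0) = 1 := by ext; norm_num
  rw [h1] at h
  simpa [neg_one_mul] using h

lemma gaussian_half_nonneg (v : ℝ≥0) :
    (1 : ℝ≥0∞)/2 ≤ gaussianReal 0 v {x : ℝ | 0 ≤ x} := by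
  set m := gaussianReal 0 v
  have hsymm : m {x : ℝ | x ≤ 0} = m {x : ℝ | 0 ≤ x} := by
    have : {x : ℝ | x ≤ 0} = (fun x : ℝ => -x) ⁻¹' {x : ℝ | 0 ≤ x} := by
      ext x; simp
    rw [this, ← Measure.map_apply measurable_neg (by exact measurableSet_Ici),
      gaussian_map_neg]
  have hunion : (1 : ℝ≥0∞) ≤ m {x : ℝ | 0 ≤ x} + m {x : ℝ | x ≤ 0} := by
    have : (Set.univ : Set ℝ) = {x : ℝ | 0 ≤ x} ∪ {x : ℝ | x ≤ 0} := by
      ext x; simpa using le_total 0 x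
    calc (1 : ℝ≥0∞) = m Set.univ := by simp [m]
    _ ≤ m {x : ℝ | 0 ≤ x} + m {x : ℝ | x ≤ 0} := by rw [this]; exact measure_union_le _ _
  rw [hsymm] at hunion
  by_contra hlt
  push_neg at hlt
  have := ENNReal.add_lt_add hlt hlt
  rw [ENNReal.add_halves] at this
  exact absurd hunion (not_le.2 this)

lemma gaussian_half_nonpos (v : ℝ≥0) :
    (1 : ℝ≥0∞)/2 ≤ gaussianReal 0 v {x : ℝ | x ≤ 0} := by
  have hsymm : gaussianReal 0 v {x : ℝ | x ≤ 0} = gaussianReal 0 v {x : ℝ | 0 ≤ x} := by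
    have : {x : ℝ | x ≤ 0} = (fun x : ℝ => -x) ⁻¹' {x : ℝ | 0 ≤ x} := by
      ext x; simp
    rw [this, ← Measure.map_apply measurable_neg (by exact measurableSet_Ici),
      gaussian_map_neg]
  rw [hsymm]; exact gaussian_half_nonneg v

lemma gaussian_tail (v : ℝ≥0) (hv : v ≠ 0) {a : ℝ} (ha : 0 ≤ a) :
    gaussianReal 0 v {x : ℝ | a < x}
      ≤ ENNReal.ofReal (Real.sqrt 2 * Real.exp (-(a^2) / (4*v))) := by
  have h2v : (2 * v : ℝ≥0) ≠ 0 := by simp [hv]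
  set c : ℝ := Real.sqrt 2 * Real.exp (-(a^2) / (4*v)) with hc
  have hc0 : 0 ≤ c := mul_nonneg (Real.sqrt_nonneg _) (Real.exp_pos _).le
  have hpt : ∀ x : ℝ, a < x →
      gaussianPDFReal 0 v x ≤ c * gaussianPDFReal 0 (2*v) x := by
    intro x hx
    have hv0 : (0:ℝ) < (v:ℝ) := by
      have := pos_iff_ne_zero.2 hv
      exact_mod_cast this
    rw [gaussianPDFReal, gaussianPDFReal]
    have hcoe : ((2 * v : ℝ≥0) : ℝ) = 2 * (v:ℝ) := by push_cast; ring
    rw [hcoe]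
    have hsqrt : Real.sqrt (2 * Real.pi * (2*(v:ℝ))) = Real.sqrt 2 * Real.sqrt (2 * Real.pi * v) := by
      rw [← Real.sqrt_mul (by norm_num)]
      ring_nf
    have hπ : (0:ℝ) < 2 * Real.pi * v := by positivity
    have hexp : Real.exp (-(x - 0)^2 / (2*(v:ℝ))) ≤
        Real.exp (-(a^2) / (4*(v:ℝ))) * Real.exp (-(x-0)^2 / (2*(2*(v:ℝ)))) := by
      rw [← Real.exp_add, Real.exp_le_exp]
      have hx2 : a^2 ≤ x^2 := by nlinarith [ha.trans hx.le]
      rw [sub_zero]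
      rw [div_add_div _ _ (by positivity : (4*(v:ℝ)) ≠ 0) (by positivity : (2*(2*(v:ℝ))) ≠ 0)]
      rw [div_le_div_iff₀ (by positivity) (by positivity)]
      nlinarith [mul_nonneg (mul_nonneg (sub_nonneg.2 hx2) hv0.le) hv0.le]
    calc (Real.sqrt (2 * Real.pi * v))⁻¹ * Real.exp (-(x - 0)^2 / (2*(v:ℝ)))
        ≤ (Real.sqrt (2 * Real.pi * v))⁻¹ *
          (Real.exp (-(a^2) / (4*(v:ℝ))) * Real.exp (-(x-0)^2 / (2*(2*(v:ℝ))))) := by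
          apply mul_le_mul_of_nonneg_left hexp
          positivity
      _ = c * ((Real.sqrt (2 * Real.pi * (2*(v:ℝ))))⁻¹ * Real.exp (-(x-0)^2 / (2*(2*(v:ℝ))))) := by
          rw [hsqrt, hc]
          have h2 : Real.sqrt 2 ≠ 0 := by positivity
          field_simp
  -- now the measure estimate
  rw [gaussianReal_apply 0 hv]
  calc ∫⁻ x in {x : ℝ | a < x}, gaussianPDF 0 v x
      ≤ ∫⁻ x in {x : ℝ | a < x}, ENNReal.ofReal c * gaussianPDF 0 (2*v) x := by
        apply setLIntegral_mono (measurable_const.mul (measurable_gaussianPDF _ _))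
        intro x hx
        simp only [gaussianPDF_def, Pi.mul_apply]
        rw [← ENNReal.ofReal_mul hc0]
        exact ENNReal.ofReal_le_ofReal (hpt x hx)
    _ ≤ ∫⁻ x, ENNReal.ofReal c * gaussianPDF 0 (2*v) x := setLIntegral_le_lintegral _ _
    _ = ENNReal.ofReal c * ∫⁻ x, gaussianPDF 0 (2*v) x := lintegral_const_mul _ (measurable_gaussianPDF _ _)
    _ = ENNReal.ofReal c := by rw [lintegral_gaussianPDF_eq_one 0 h2v, mul_one]


variable {Ω : Type} [MeasurableSpace Ω] (P : Measure Ω) [IsProbabilityMeasure P]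


lemma levy_max (n : ℕ) (X : Fin n → Ω → ℝ) (hX : ∀ i, Measurable (X i))
    (hInd : iIndepFun X P)
    (hhalf : ∀ i : Fin n, (1:ℝ≥0∞)/2 ≤ P {ω | 0 ≤ ∑ j ∈ Finset.Ioi i, X j ω})
    (a : ℝ) :
    P {ω | ∃ i : Fin n, a < ∑ j ∈ Finset.Iic i, X j ω} ≤ 2 * P {ω | a < ∑ j, X j ω} := by
  classical
  set S : Fin n → Ω → ℝ := fun i ω => ∑ j ∈ Finset.Iic i, X j ω with hS
  have hSmeas : ∀ i, Measurable (S i) := fun i => Finset.measurable_sum _ (fun l _ => hX l)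
  set E : Fin n → Set Ω :=
    fun i => {ω | (∀ j, j < i → S j ω ≤ a) ∧ a < S i ω} with hE
  have hEmeas : ∀ i, MeasurableSet (E i) := by
    intro i
    have : E i = (⋂ (j : Fin n), ⋂ (_ : j < i), {ω | S j ω ≤ a}) ∩ {ω | a < S i ω} := by
      ext ω; simp [hE, Set.mem_iInter]
    rw [this]
    exact (MeasurableSet.iInter fun j => MeasurableSet.iInter fun _ =>
      measurableSet_le (hSmeas j) measurable_const).inter
      (measurableSet_lt measurable_const (hSmeas i))
  have hcover : {ω | ∃ i : Fin n, a < S i ω} = ⋃ i, E i := by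
    ext ω
    constructor
    · rintro ⟨i, hi⟩
      have hne : (Finset.univ.filter (fun i => a < S i ω)).Nonempty :=
        ⟨i, by simp [hi]⟩
      set i₀ := (Finset.univ.filter (fun i => a < S i ω)).min' hne with hi₀
      refine Set.mem_iUnion.2 ⟨i₀, ?_, ?_⟩
      · intro j hj
        by_contra hja
        push_neg at hja
        have : i₀ ≤ j := Finset.min'_le _ _ (by simp [hja])
        exact absurd (lt_of_le_of_lt this hj) (lt_irrefl _)
      · have := (Finset.univ.filter (fun i => a < S i ω)).min'_mem hne
        simpa [hi₀] using (Finset.mem_filter.1 this).2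
    · rintro ⟨s, ⟨i, rfl⟩, hmem⟩
      exact ⟨i, hmem.2⟩
  have hdisj : Pairwise (Function.onFun Disjoint E) := by
    intro i j hij
    rcases lt_or_gt_of_ne hij with h | h
    · exact Set.disjoint_left.2 fun ω hi hj => absurd (hj.1 i h) (not_le.2 hi.2)
    · exact Set.disjoint_left.2 fun ω hi hj => absurd (hi.1 j h) (not_le.2 hj.2)
  set T : Fin n → Set Ω := fun i => {ω | 0 ≤ ∑ j ∈ Finset.Ioi i, X j ω} with hT
  have hTmeas : ∀ i, MeasurableSet (T i) :=
    fun i => measurableSet_le measurable_const (Finset.measurable_sum _ (fun l _ => hX l))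
  -- independence: P (E i ∩ T i) = P (E i) * P (T i)
  have hkey : ∀ i, P (E i ∩ T i) = P (E i) * P (T i) := by
    intro i
    have hdisjF : Disjoint (Finset.Iic i) (Finset.Ioi i) := by
      simp only [Finset.disjoint_left, Finset.mem_Iic, Finset.mem_Ioi]
      exact fun j hj hj' => absurd hj (not_le.2 hj')
    have hIF := hInd.indepFun_finset (Finset.Iic i) (Finset.Ioi i) hdisjF hX
    -- compose with measurable maps
    set F : Ω → ({x // x ∈ Finset.Iic i} → ℝ) :=
      fun ω => fun (l : {x // x ∈ Finset.Iic i}) => X l.1 ω with hF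
    set g : ({x // x ∈ Finset.Ioi i} → ℝ) → ℝ :=
      fun w => ∑ l ∈ (Finset.Ioi i).attach, w l with hg
    have hgmeas : Measurable g := Finset.measurable_sum _ (fun l _ => measurable_pi_apply l)
    have hIF2 : IndepFun F (fun ω => g (fun l => X l.1 ω)) P := hIF.comp measurable_id hgmeas
    set M : Set ({x // x ∈ Finset.Iic i} → ℝ) :=
      {v | (∀ j : Fin n, ∀ h : j < i,
          ∑ l ∈ (Finset.Iic j).attach,
            v ⟨l.1, Finset.mem_Iic.2 ((Finset.mem_Iic.1 l.2).trans h.le)⟩ ≤ a) ∧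
        a < ∑ l ∈ (Finset.Iic i).attach, v ⟨l.1, l.2⟩} with hM
    have hMmeas : MeasurableSet M := by
      have h1 : ∀ (j : Fin n) (h : j < i), Measurable
          (fun v : ({x // x ∈ Finset.Iic i} → ℝ) =>
            ∑ l ∈ (Finset.Iic j).attach,
              v ⟨l.1, Finset.mem_Iic.2 ((Finset.mem_Iic.1 l.2).trans h.le)⟩) :=
        fun j h => Finset.measurable_sum _ (fun l _ => measurable_pi_apply _)
      have h2 : Measurable (fun v : ({x // x ∈ Finset.Iic i} → ℝ) =>
          ∑ l ∈ (Finset.Iic i).attach, v ⟨l.1, l.2⟩) :=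
        Finset.measurable_sum _ (fun l _ => measurable_pi_apply _)
      have : M = (⋂ (j : Fin n), ⋂ (h : j < i),
          {v | ∑ l ∈ (Finset.Iic j).attach,
            v ⟨l.1, Finset.mem_Iic.2 ((Finset.mem_Iic.1 l.2).trans h.le)⟩ ≤ a}) ∩
          {v | a < ∑ l ∈ (Finset.Iic i).attach, v ⟨l.1, l.2⟩} := by
        ext v; simp [hM, Set.mem_iInter]
      rw [this]
      exact (MeasurableSet.iInter fun j => MeasurableSet.iInter fun h =>
        measurableSet_le (h1 j h) measurable_const).inter
        (measurableSet_lt measurable_const h2)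
    have hEpre : E i = F ⁻¹' M := by
      ext ω
      simp only [hE, hM, Set.mem_preimage, Set.mem_setOf_eq, hF]
      have hsum : ∀ j : Fin n, j ≤ i → ∀ (hsub : ∀ l ∈ Finset.Iic j, l ∈ Finset.Iic i),
          True := fun _ _ _ => trivial
      constructor
      · rintro ⟨h1, h2⟩
        constructor
        · intro j hj
          rw [Finset.sum_attach (Finset.Iic j) (fun l => X l ω)]
          exact h1 j hj
        · rwa [Finset.sum_attach (Finset.Iic i) (fun l => X l ω)]
      · rintro ⟨h1, h2⟩
        constructor
        · intro j hj
          have := h1 j hj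
          rwa [Finset.sum_attach (Finset.Iic j) (fun l => X l ω)] at this
        · rwa [Finset.sum_attach (Finset.Iic i) (fun l => X l ω)] at h2
    have hTpre : T i = (fun ω => g (fun l => X l.1 ω)) ⁻¹' (Set.Ici 0) := by
      ext ω
      simp only [hT, hg, Set.mem_preimage, Set.mem_Ici, Set.mem_setOf_eq]
      rw [Finset.sum_attach (Finset.Ioi i) (fun l => X l ω)]
    rw [hEpre, hTpre]
    exact hIF2.measure_inter_preimage_eq_mul M (Set.Ici 0) hMmeas measurableSet_Ici
  -- per-index bound
  have hper : ∀ i, P (E i) ≤ 2 * P (E i ∩ T i) := by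
    intro i
    rw [hkey i]
    have h1 : P (E i) * (1/2) ≤ P (E i) * P (T i) :=
      mul_le_mul_right (hhalf i) _
    calc P (E i) = 2 * (P (E i) * (1/2)) := by
          rw [one_div, mul_comm (2:ℝ≥0∞), mul_assoc, ENNReal.inv_mul_cancel (by norm_num) (by norm_num), mul_one]
      _ ≤ 2 * (P (E i) * P (T i)) := by exact mul_le_mul_right h1 _
  -- assemble
  have hsplit : ∀ (i : Fin n) ω, (∑ j, X j ω) = S i ω + ∑ j ∈ Finset.Ioi i, X j ω := by
    intro i ω
    rw [hS]
    have hU : Finset.Iic i ∪ Finset.Ioi i = Finset.univ := by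
      ext j; simp [le_or_gt]
    have hdisjF : Disjoint (Finset.Iic i) (Finset.Ioi i) := by
      simp only [Finset.disjoint_left, Finset.mem_Iic, Finset.mem_Ioi]
      exact fun j hj hj' => absurd hj (not_le.2 hj')
    rw [← hU, Finset.sum_union hdisjF]
  have hsub : (⋃ i, E i ∩ T i) ⊆ {ω | a < ∑ j, X j ω} := by
    rintro ω ⟨s, ⟨i, rfl⟩, hmem⟩
    have h1 : a < S i ω := hmem.1.2
    have h2 : 0 ≤ ∑ j ∈ Finset.Ioi i, X j ω := hmem.2
    simp only [Set.mem_setOf_eq, hsplit i ω]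
    linarith
  calc P {ω | ∃ i : Fin n, a < ∑ j ∈ Finset.Iic i, X j ω}
      = P (⋃ i, E i) := by rw [← hcover]
    _ = ∑ i, P (E i) := by
        rw [measure_iUnion hdisj hEmeas, tsum_fintype]
    _ ≤ ∑ i, 2 * P (E i ∩ T i) := Finset.sum_le_sum (fun i _ => hper i)
    _ = 2 * ∑ i, P (E i ∩ T i) := by rw [Finset.mul_sum]
    _ = 2 * P (⋃ i, E i ∩ T i) := by
        rw [measure_iUnion (fun i j hij => Disjoint.mono Set.inter_subset_left
          Set.inter_subset_left (hdisj hij)) (fun i => (hEmeas i).inter (hTmeas i)), tsum_fintype]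
    _ ≤ 2 * P {ω | a < ∑ j, X j ω} := mul_le_mul_right (measure_mono hsub) _


lemma levy_grid (B : ℝ → Ω → ℝ) (hBM : IsStdBM P B) {t a : ℝ} (ht : 0 ≤ t) (ha : 0 < a)
    (F : Finset ℝ) (hF : ∀ q ∈ F, 0 ≤ q ∧ q ≤ t) :
    P {ω | ∃ q ∈ F, a < |B q ω|} ≤ 2 * P {ω | a < B t ω} + 2 * P {ω | B t ω < -a} := by
  classical
  obtain ⟨hBmeas, hBcont, hB0, hBind, hBlaw⟩ := hBM
  set G : Finset ℝ := insert t (insert 0 F) with hG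
  have hGmem : ∀ x ∈ G, 0 ≤ x ∧ x ≤ t := by
    intro x hx
    rcases Finset.mem_insert.1 hx with rfl | hx
    · exact ⟨ht, le_refl _⟩
    · rcases Finset.mem_insert.1 hx with rfl | hx
      · exact ⟨le_refl _, ht⟩
      · exact hF x hx
  set L : List ℝ := G.sort (· ≤ ·) with hL
  have hLsorted : L.Pairwise (· ≤ ·) := Finset.pairwise_sort _ _
  have hmemL : ∀ x, x ∈ L ↔ x ∈ G := fun x => Finset.mem_sort _
  set n : ℕ := L.length with hn
  have hnpos : 0 < n := by
    rw [hn]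
    apply List.length_pos_iff.2
    intro hnil
    have : t ∈ L := (hmemL t).2 (Finset.mem_insert_self _ _)
    rw [hnil] at this
    exact absurd this List.not_mem_nil
  set u : ℕ → ℝ := fun i => if h : i < n then L[i] else t with hu
  have hu_memG : ∀ i, i < n → u i ∈ G := by
    intro i hi
    have : L[i] ∈ L := List.getElem_mem _
    rw [hu]
    simp only [hi, dif_pos]
    exact (hmemL _).1 this
  have hu_mem : ∀ i, 0 ≤ u i ∧ u i ≤ t := by
    intro i
    by_cases hi : i < n
    · exact hGmem _ (hu_memG i hi)
    · rw [hu]; simp only [hi, dif_neg, not_false_iff]; exact ⟨ht, le_refl _⟩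
  have hu_mono : Monotone u := by
    intro i j hij
    by_cases hj : j < n
    · have hi : i < n := lt_of_le_of_lt hij hj
      have hgot : L[i] ≤ L[j] := by
        have := hLsorted.rel_get_of_le (a := ⟨i, hi⟩) (b := ⟨j, hj⟩) hij
        simpa [List.get_eq_getElem] using this
      simpa [hu, hi, hj] using hgot
    · have hjt : u j = t := by simp [hu, hj]
      rw [hjt]
      exact (hu_mem i).2
  have hu0 : u 0 = 0 := by
    have h0G : (0:ℝ) ∈ G := Finset.mem_insert.2 (Or.inr (Finset.mem_insert_self _ _))
    obtain ⟨k, hk, hkeq⟩ := List.mem_iff_getElem.1 ((hmemL (0:ℝ)).2 h0G)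
    have h1 : u 0 ≤ u k := hu_mono (Nat.zero_le k)
    have h2 : u k = 0 := by rw [hu]; exact (dif_pos (show k < n from hk)).trans hkeq
    have h3 : 0 ≤ u 0 := (hu_mem 0).1
    rw [h2] at h1
    linarith
  have hun : u n = t := by rw [hu]; simp
  have hu_surj : ∀ x ∈ G, ∃ k, k < n ∧ u k = x := by
    intro x hx
    obtain ⟨k, hk, hkeq⟩ := List.mem_iff_getElem.1 ((hmemL x).2 hx)
    exact ⟨k, hk, by rw [hu]; exact (dif_pos (show k < n from hk)).trans hkeq⟩
  -- increments
  set X : Fin n → Ω → ℝ := fun i ω => B (u (i.1+1)) ω - B (u i.1) ω with hX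
  have hXmeas : ∀ i, Measurable (X i) := fun i => (hBmeas _).sub (hBmeas _)
  have hXind : iIndepFun X P :=
    hBind n u hu_mono (fun i => (hu_mem i).1)
  have hXnegind : iIndepFun (fun i ω => -(X i ω)) P :=
    hXind.comp (fun _ => Neg.neg) (fun _ => measurable_neg)
  -- partial sums
  have hpartial : ∀ (ω : Ω) (m : ℕ), m ≤ n →
      ∑ j ∈ Finset.univ.filter (fun j : Fin n => j.1 < m), X j ω = B (u m) ω - B (u 0) ω := by
    intro ω m
    induction m with
    | zero =>
      intro _
      have : Finset.univ.filter (fun j : Fin n => j.1 < 0) = ∅ := by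
        ext j; simp
      simp [this]
    | succ m ih =>
      intro hm
      have hmn : m < n := hm
      have hstep : Finset.univ.filter (fun j : Fin n => j.1 < m + 1)
          = insert (⟨m, hmn⟩ : Fin n) (Finset.univ.filter (fun j : Fin n => j.1 < m)) := by
        ext j
        simp only [Finset.mem_filter, Finset.mem_univ, true_and, Finset.mem_insert]
        constructor
        · intro h
          rcases Nat.lt_succ_iff_lt_or_eq.1 h with h | h
          · exact Or.inr h
          · exact Or.inl (Fin.ext h)
        · rintro (rfl | h)
          · exact Nat.lt_succ_self m
          · exact Nat.lt_succ_of_lt h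
      rw [hstep, Finset.sum_insert (by simp)]
      rw [ih (le_of_lt hmn)]
      simp only [hX]
      ring_nf
  have hIic : ∀ (i : Fin n) (ω : Ω),
      ∑ j ∈ Finset.Iic i, X j ω = B (u (i.1+1)) ω - B (u 0) ω := by
    intro i ω
    have : Finset.Iic i = Finset.univ.filter (fun j : Fin n => j.1 < i.1 + 1) := by
      ext j
      simp only [Finset.mem_Iic, Finset.mem_filter, Finset.mem_univ, true_and,
        Nat.lt_succ_iff, Fin.le_def]
    rw [this, hpartial ω (i.1+1) i.2]
  have huniv : ∀ ω : Ω, ∑ j, X j ω = B t ω := by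
    intro ω
    have h1 : (Finset.univ : Finset (Fin n)) = Finset.univ.filter (fun j : Fin n => j.1 < n) := by
      ext j; simp [j.2]
    rw [h1, hpartial ω n (le_refl n), hun, hu0, hB0, sub_zero]
  have hIoi : ∀ (i : Fin n) (ω : Ω),
      ∑ j ∈ Finset.Ioi i, X j ω = B t ω - B (u (i.1+1)) ω := by
    intro i ω
    have hU : Finset.Iic i ∪ Finset.Ioi i = Finset.univ := by
      ext j; simp [le_or_gt]
    have hdisjF : Disjoint (Finset.Iic i) (Finset.Ioi i) := by
      simp only [Finset.disjoint_left, Finset.mem_Iic, Finset.mem_Ioi]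
      exact fun j hj hj' => absurd hj (not_le.2 hj')
    have := Finset.sum_union hdisjF (f := fun j => X j ω)
    rw [hU] at this
    rw [huniv ω] at this
    rw [hIic i ω] at this
    have := this.symm
    rw [hu0, hB0, sub_zero] at this
    linarith [this]
  -- the half conditions
  have hhalfpos : ∀ i : Fin n, (1:ℝ≥0∞)/2 ≤ P {ω | 0 ≤ ∑ j ∈ Finset.Ioi i, X j ω} := by
    intro i
    have hset : {ω | 0 ≤ ∑ j ∈ Finset.Ioi i, X j ω}
        = (fun ω => B t ω - B (u (i.1+1)) ω) ⁻¹' (Set.Ici 0) := by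
      ext ω; simp only [Set.mem_setOf_eq, Set.mem_preimage, Set.mem_Ici, hIoi i ω]
    rw [hset]
    have hmeas : Measurable (fun ω => B t ω - B (u (i.1+1)) ω) := (hBmeas _).sub (hBmeas _)
    rw [← Measure.map_apply hmeas measurableSet_Ici]
    rw [hBlaw (u (i.1+1)) t (hu_mem _).1 (hu_mem _).2]
    have : (Set.Ici (0:ℝ)) = {x : ℝ | 0 ≤ x} := rfl
    rw [this]
    exact gaussian_half_nonneg _
  have hhalfneg : ∀ i : Fin n, (1:ℝ≥0∞)/2 ≤ P {ω | 0 ≤ ∑ j ∈ Finset.Ioi i, -(X j ω)} := by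
    intro i
    have hsum : ∀ ω, ∑ j ∈ Finset.Ioi i, -(X j ω) = -(∑ j ∈ Finset.Ioi i, X j ω) :=
      fun ω => by rw [Finset.sum_neg_distrib]
    have hset : {ω | 0 ≤ ∑ j ∈ Finset.Ioi i, -(X j ω)}
        = (fun ω => B t ω - B (u (i.1+1)) ω) ⁻¹' (Set.Iic 0) := by
      ext ω
      simp only [Set.mem_setOf_eq, Set.mem_preimage, Set.mem_Iic, hsum ω, hIoi i ω]
      constructor
      · intro h; linarith
      · intro h; linarith
    rw [hset]
    have hmeas : Measurable (fun ω => B t ω - B (u (i.1+1)) ω) := (hBmeas _).sub (hBmeas _)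
    rw [← Measure.map_apply hmeas measurableSet_Iic]
    rw [hBlaw (u (i.1+1)) t (hu_mem _).1 (hu_mem _).2]
    have : (Set.Iic (0:ℝ)) = {x : ℝ | x ≤ 0} := rfl
    rw [this]
    exact gaussian_half_nonpos _
  -- apply Levy, positive side
  have hpos := levy_max P n X hXmeas hXind hhalfpos a
  have hneg := levy_max P n (fun i ω => -(X i ω)) (fun i => (hXmeas i).neg) hXnegind hhalfneg a
  -- rewrite the Levy conclusions
  have hposset : {ω | ∃ i : Fin n, a < ∑ j ∈ Finset.Iic i, X j ω}
      = {ω | ∃ i : Fin n, a < B (u (i.1+1)) ω} := by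
    ext ω
    constructor
    · rintro ⟨i, hi⟩; rw [hIic i ω, hu0, hB0, sub_zero] at hi; exact ⟨i, hi⟩
    · rintro ⟨i, hi⟩; exact ⟨i, by rw [hIic i ω, hu0, hB0, sub_zero]; exact hi⟩
  have hnegset : {ω | ∃ i : Fin n, a < ∑ j ∈ Finset.Iic i, -(X j ω)}
      = {ω | ∃ i : Fin n, B (u (i.1+1)) ω < -a} := by
    ext ω
    have hsum : ∀ i : Fin n, ∑ j ∈ Finset.Iic i, -(X j ω) = -(B (u (i.1+1)) ω) := by
      intro i
      rw [Finset.sum_neg_distrib, hIic i ω, hu0, hB0, sub_zero]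
    constructor
    · rintro ⟨i, hi⟩; rw [hsum i] at hi; exact ⟨i, by linarith⟩
    · rintro ⟨i, hi⟩; exact ⟨i, by rw [hsum i]; linarith⟩
  have hposuniv : {ω | a < ∑ j, X j ω} = {ω | a < B t ω} := by
    ext ω; rw [Set.mem_setOf_eq, huniv ω]; rfl
  have hneguniv : {ω | a < ∑ j, -(X j ω)} = {ω | B t ω < -a} := by
    ext ω
    rw [Set.mem_setOf_eq, Finset.sum_neg_distrib, huniv ω, Set.mem_setOf_eq]
    constructor <;> intro h <;> linarith
  rw [hposset, hposuniv] at hpos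
  rw [hnegset, hneguniv] at hneg
  -- coverage
  have hcov : {ω | ∃ q ∈ F, a < |B q ω|}
      ⊆ {ω | ∃ i : Fin n, a < B (u (i.1+1)) ω} ∪ {ω | ∃ i : Fin n, B (u (i.1+1)) ω < -a} := by
    rintro ω ⟨q, hqF, habs⟩
    have hqG : q ∈ G := Finset.mem_insert.2 (Or.inr (Finset.mem_insert.2 (Or.inr hqF)))
    obtain ⟨k, hk, hkq⟩ := hu_surj q hqG
    have hk0 : k ≠ 0 := by
      intro h
      rw [h, hu0] at hkq
      rw [← hkq, hB0] at habs
      simp at habs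
      linarith
    obtain ⟨k', rfl⟩ := Nat.exists_eq_succ_of_ne_zero hk0
    have hk' : k' < n := lt_trans (Nat.lt_succ_self k') hk
    rcases lt_abs.1 habs with h | h
    · exact Or.inl ⟨⟨k', hk'⟩, by rw [hkq]; exact h⟩
    · exact Or.inr ⟨⟨k', hk'⟩, by rw [hkq]; linarith⟩
  calc P {ω | ∃ q ∈ F, a < |B q ω|}
      ≤ P ({ω | ∃ i : Fin n, a < B (u (i.1+1)) ω} ∪ {ω | ∃ i : Fin n, B (u (i.1+1)) ω < -a}) :=
        measure_mono hcov
    _ ≤ P {ω | ∃ i : Fin n, a < B (u (i.1+1)) ω} + P {ω | ∃ i : Fin n, B (u (i.1+1)) ω < -a} :=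
        measure_union_le _ _
    _ ≤ 2 * P {ω | a < B t ω} + 2 * P {ω | B t ω < -a} := add_le_add hpos hneg



lemma gaussian_tail_neg (v : ℝ≥0) (hv : v ≠ 0) {a : ℝ} (ha : 0 ≤ a) :
    gaussianReal 0 v {x : ℝ | x < -a}
      ≤ ENNReal.ofReal (Real.sqrt 2 * Real.exp (-(a^2) / (4*v))) := by
  have hset : {x : ℝ | x < -a} = (fun x : ℝ => -x) ⁻¹' {x : ℝ | a < x} := by
    ext x
    simp only [Set.mem_setOf_eq, Set.mem_preimage]
    constructor <;> intro h <;> linarith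
  rw [hset, ← Measure.map_apply measurable_neg (by exact measurableSet_Ioi), gaussian_map_neg]
  exact gaussian_tail v hv ha

lemma bm_tail (B : ℝ → Ω → ℝ) (hBM : IsStdBM P B) {t a : ℝ} (ht : 0 < t) (ha : 0 < a) :
    P {ω | ∃ q : ℚ, 0 ≤ (q:ℝ) ∧ (q:ℝ) ≤ t ∧ a < |B (q:ℝ) ω|}
      ≤ ENNReal.ofReal (4 * Real.sqrt 2 * Real.exp (-(a^2) / (4*t))) := by
  classical
  obtain ⟨hBmeas, hBcont, hB0, hBind, hBlaw⟩ := hBM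
  have htNN : (Real.toNNReal t) ≠ 0 := by
    simp only [ne_eq, Real.toNNReal_eq_zero, not_le]
    exact ht
  have hcoe : ((Real.toNNReal t : ℝ≥0) : ℝ) = t := Real.coe_toNNReal t ht.le
  -- single-time tail bounds
  have hmaps : P.map (fun ω => B t ω) = gaussianReal 0 (Real.toNNReal t) := by
    have h1 : (fun ω => B t ω - B 0 ω) = fun ω => B t ω := by
      funext ω; rw [hB0, sub_zero]
    have := hBlaw 0 t (le_refl 0) ht.le
    rw [h1] at this
    rw [this]
    norm_num
  have htail1 : P {ω | a < B t ω} ≤ ENNReal.ofReal (Real.sqrt 2 * Real.exp (-(a^2) / (4*t))) := by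
    have hset : {ω | a < B t ω} = (fun ω => B t ω) ⁻¹' {x : ℝ | a < x} := rfl
    rw [hset, ← Measure.map_apply (hBmeas t) (by exact measurableSet_Ioi), hmaps]
    have := gaussian_tail (Real.toNNReal t) htNN ha.le
    rwa [hcoe] at this
  have htail2 : P {ω | B t ω < -a} ≤ ENNReal.ofReal (Real.sqrt 2 * Real.exp (-(a^2) / (4*t))) := by
    have hset : {ω | B t ω < -a} = (fun ω => B t ω) ⁻¹' {x : ℝ | x < -a} := rfl
    rw [hset, ← Measure.map_apply (hBmeas t) (by exact measurableSet_Iio), hmaps]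
    have := gaussian_tail_neg (Real.toNNReal t) htNN ha.le
    rwa [hcoe] at this
  -- countable union
  set e : ℕ → ℚ := fun m => (Denumerable.eqv ℚ).symm m with he
  set A : ℚ → Set Ω := fun q => {ω | 0 ≤ (q:ℝ) ∧ (q:ℝ) ≤ t ∧ a < |B (q:ℝ) ω|} with hA
  set V : ℕ → Set Ω := fun m => ⋃ i ∈ Finset.range (m+1), A (e i) with hV
  have hVmono : Monotone V := by
    intro m m' hmm' ω hω
    rw [hV] at hω ⊢
    rw [Set.mem_iUnion₂] at hω ⊢
    obtain ⟨i, hi, hmem⟩ := hω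
    exact ⟨i, Finset.mem_range.2 (by have := Finset.mem_range.1 hi; omega), hmem⟩
  have hcover : {ω | ∃ q : ℚ, 0 ≤ (q:ℝ) ∧ (q:ℝ) ≤ t ∧ a < |B (q:ℝ) ω|} = ⋃ m, V m := by
    ext ω
    constructor
    · rintro ⟨q, hq⟩
      refine Set.mem_iUnion.2 ⟨Denumerable.eqv ℚ q, ?_⟩
      apply Set.mem_biUnion (Finset.self_mem_range_succ _)
      have : e (Denumerable.eqv ℚ q) = q := (Denumerable.eqv ℚ).symm_apply_apply q
      rw [this]
      exact hq
    · rintro ⟨s, ⟨m, rfl⟩, hmem⟩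
      obtain ⟨sᵢ, ⟨i, rfl⟩, hmem2⟩ := hmem
      simp only [Set.mem_iUnion, exists_prop] at hmem2
      exact ⟨e i, hmem2.2⟩
  have hdir : Directed (· ⊆ ·) V := hVmono.directed_le
  have hVle : ∀ m, P (V m)
      ≤ ENNReal.ofReal (4 * Real.sqrt 2 * Real.exp (-(a^2) / (4*t))) := by
    intro m
    set F : Finset ℝ :=
      ((Finset.range (m+1)).image (fun i => ((e i : ℚ) : ℝ))).filter
        (fun x => 0 ≤ x ∧ x ≤ t) with hF
    have hFmem : ∀ q ∈ F, 0 ≤ q ∧ q ≤ t := fun q hq => (Finset.mem_filter.1 hq).2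
    have hsub : V m ⊆ {ω | ∃ q ∈ F, a < |B q ω|} := by
      rintro ω hω
      obtain ⟨s, ⟨i, rfl⟩, hmem⟩ := hω
      simp only [Set.mem_iUnion, exists_prop] at hmem
      obtain ⟨hi, h0, hle, habs⟩ := hmem
      refine ⟨((e i : ℚ) : ℝ), ?_, habs⟩
      rw [hF]
      apply Finset.mem_filter.2
      exact ⟨Finset.mem_image.2 ⟨i, hi, rfl⟩, h0, hle⟩
    calc P (V m) ≤ P {ω | ∃ q ∈ F, a < |B q ω|} := measure_mono hsub
      _ ≤ 2 * P {ω | a < B t ω} + 2 * P {ω | B t ω < -a} :=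
          levy_grid P B ⟨hBmeas, hBcont, hB0, hBind, hBlaw⟩ ht.le ha F hFmem
      _ ≤ 2 * ENNReal.ofReal (Real.sqrt 2 * Real.exp (-(a^2) / (4*t)))
          + 2 * ENNReal.ofReal (Real.sqrt 2 * Real.exp (-(a^2) / (4*t))) := by
          exact add_le_add (mul_le_mul_right htail1 _) (mul_le_mul_right htail2 _)
      _ = ENNReal.ofReal (4 * Real.sqrt 2 * Real.exp (-(a^2) / (4*t))) := by
          rw [← two_mul, ← mul_assoc]
          have h2 : (2:ℝ≥0∞) * 2 = ENNReal.ofReal 4 := by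
            rw [ENNReal.ofReal_ofNat]
            norm_num
          rw [h2, ← ENNReal.ofReal_mul (by norm_num)]
          ring_nf
  rw [hcover, Directed.measure_iUnion hdir]
  exact iSup_le hVle


lemma rat_bound_to_all {f : ℝ → ℝ} (hf : Continuous f) {t a : ℝ} (ht : 0 < t)
    (h : ∀ q : ℚ, 0 ≤ (q:ℝ) → (q:ℝ) ≤ t → |f q| ≤ a) :
    ∀ s, 0 ≤ s → s ≤ t → |f s| ≤ a := by
  intro s hs0 hst
  by_contra hgt
  push_neg at hgt
  have hopen : IsOpen {x : ℝ | a < |f x|} := isOpen_lt continuous_const hf.abs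
  obtain ⟨ε, hε, hball⟩ := Metric.isOpen_iff.1 hopen s hgt
  rcases lt_or_eq_of_le hst with hlt | heqt
  · have hbound : s < min t (s + ε) := lt_min hlt (by linarith)
    obtain ⟨q, hq1, hq2⟩ := exists_rat_btwn hbound
    have hq0 : 0 ≤ (q:ℝ) := le_of_lt (lt_of_le_of_lt hs0 hq1)
    have hqt : (q:ℝ) ≤ t := le_of_lt (lt_of_lt_of_le hq2 (min_le_left _ _))
    have hmem : (q:ℝ) ∈ Metric.ball s ε := by
      rw [Metric.mem_ball, Real.dist_eq, abs_of_pos (by linarith : (0:ℝ) < (q:ℝ) - s)]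
      have := lt_of_lt_of_le hq2 (min_le_right _ _)
      linarith
    exact absurd (h q hq0 hqt) (not_le.2 (hball hmem))
  · have hbound : max 0 (t - ε) < t := by
      apply max_lt ht
      linarith
    obtain ⟨q, hq1, hq2⟩ := exists_rat_btwn hbound
    have hq0 : 0 ≤ (q:ℝ) := le_of_lt (lt_of_le_of_lt (le_max_left _ _) hq1)
    have hqt : (q:ℝ) ≤ t := le_of_lt hq2
    have hmem : (q:ℝ) ∈ Metric.ball s ε := by
      rw [Metric.mem_ball, Real.dist_eq, heqt]
      rw [abs_of_nonpos (by linarith : (q:ℝ) - t ≤ 0)]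
      have := lt_of_le_of_lt (le_max_right 0 (t - ε)) hq1
      linarith
    exact absurd (h q hq0 hqt) (not_le.2 (hball hmem))

lemma master_bound (B : Fin 6 → ℝ → Ω → ℝ) (hBM : ∀ k, IsStdBM P (B k))
    (Q : Set Ω) (hQ : P Qᶜ = 0) (E : Set Ω) {t a : ℝ} (ht : 0 < t) (ha : 0 < a)
    (hsub : ∀ ω ∈ E ∩ Q, ∃ ℓ : Fin 6, ∃ q : ℚ, 0 ≤ (q:ℝ) ∧ (q:ℝ) ≤ t ∧ a < |B ℓ (q:ℝ) ω|) :
    P E ≤ ENNReal.ofReal (24 * Real.sqrt 2 * Real.exp (-(a^2) / (4*t))) := by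
  set U : Fin 6 → Set Ω :=
    fun ℓ => {ω | ∃ q : ℚ, 0 ≤ (q:ℝ) ∧ (q:ℝ) ≤ t ∧ a < |B ℓ (q:ℝ) ω|} with hU
  have h1 : E ⊆ (⋃ ℓ : Fin 6, U ℓ) ∪ Qᶜ := by
    intro ω hω
    by_cases hQω : ω ∈ Q
    · obtain ⟨ℓ, q, hq⟩ := hsub ω ⟨hω, hQω⟩
      exact Or.inl (Set.mem_iUnion.2 ⟨ℓ, ⟨q, hq⟩⟩)
    · exact Or.inr hQω
  calc P E ≤ P ((⋃ ℓ : Fin 6, U ℓ) ∪ Qᶜ) := measure_mono h1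
    _ ≤ P (⋃ ℓ : Fin 6, U ℓ) + P Qᶜ := measure_union_le _ _
    _ = P (⋃ ℓ : Fin 6, U ℓ) := by rw [hQ, add_zero]
    _ ≤ ∑ ℓ : Fin 6, P (U ℓ) := by
        rw [← tsum_fintype (L := SummationFilter.unconditional _)]
        exact measure_iUnion_le _
    _ ≤ ∑ _ℓ : Fin 6, ENNReal.ofReal (4 * Real.sqrt 2 * Real.exp (-(a^2) / (4*t))) :=
        Finset.sum_le_sum (fun ℓ _ => bm_tail P (B ℓ) (hBM ℓ) ht ha)
    _ = ENNReal.ofReal (24 * Real.sqrt 2 * Real.exp (-(a^2) / (4*t))) := by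
        rw [Finset.sum_const, Finset.card_univ, Fintype.card_fin, nsmul_eq_mul]
        rw [show ((6:ℕ):ℝ≥0∞) = ENNReal.ofReal 6 by simp]
        rw [← ENNReal.ofReal_mul (by norm_num)]
        congr 1
        ring

lemma filter_sum_eq (k : Fin 6) (hk : 1 ≤ k.1) (f : Fin 6 → ℝ) :
    ∑ ℓ ∈ Finset.univ.filter (fun ℓ : Fin 6 => 1 ≤ ℓ.1 ∧ ℓ ≠ k), f ℓ
      = (f 1 + f 2 + f 3 + f 4 + f 5) - f k := by
  classical
  have h1 : Finset.univ.filter (fun ℓ : Fin 6 => 1 ≤ ℓ.1 ∧ ℓ ≠ k)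
      = (Finset.univ.filter (fun ℓ : Fin 6 => 1 ≤ ℓ.1)).erase k := by
    ext j
    simp only [Finset.mem_filter, Finset.mem_univ, true_and, Finset.mem_erase]
    tauto
  have hkmem : k ∈ Finset.univ.filter (fun ℓ : Fin 6 => 1 ≤ ℓ.1) :=
    Finset.mem_filter.2 ⟨Finset.mem_univ _, hk⟩
  rw [h1, Finset.sum_erase_eq_sub hkmem]
  congr 1
  rw [Finset.sum_filter, Fin.sum_univ_six]
  norm_num [show ((0:Fin 6)).val = 0 from rfl, show ((1:Fin 6)).val = 1 from rfl,
    show ((2:Fin 6)).val = 2 from rfl, show ((3:Fin 6)).val = 3 from rfl,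
    show ((4:Fin 6)).val = 4 from rfl, show ((5:Fin 6)).val = 5 from rfl]

lemma pathwise (δ₁ δ₂ δ₃ δ₄ : ℝ) (hδ : DeltaCond δ₁ δ₂ δ₃ δ₄)
    (z y b : Fin 6 → ℝ → ℝ)
    (hzc : ∀ k, Continuous (z k)) (hyc : ∀ k, Continuous (y k))
    (heq : ∀ u, 0 ≤ u → ∀ k, z k u =
        z k 0 + b k u + (-1) * u + ∑ j, Rmat δ₁ δ₂ δ₃ δ₄ k j * y j u)
    (hy0 : ∀ k, y k 0 = 0)
    (hmono : ∀ k, MonotoneOn (y k) (Set.Ici (0:ℝ)))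
    (hrefl : ∀ k t₁ t₂, 0 ≤ t₁ → t₁ < t₂ → y k t₁ < y k t₂ →
        ∃ s, t₁ ≤ s ∧ s ≤ t₂ ∧ z k s = 0)
    (hznn : ∀ k u, 0 ≤ u → 0 ≤ z k u)
    (t c : ℝ) (ht : 0 ≤ t) (hc : 0 ≤ c)
    (hb : ∀ ℓ : Fin 6, ∀ s, 0 ≤ s → s ≤ t → |b ℓ s| ≤ c) :
    (∀ k : Fin 6, 1 ≤ k.1 →
      (1 - δ₃) * (y 1 t + y 2 t + y 3 t + y 4 t + y 5 t) + δ₃ * y k t ≤ t + 3*c) ∧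
    (∀ k : Fin 6, 1 ≤ k.1 →
      δ₃ * t/5 + (4*δ₃^2/25)*t - 5*c ≤ δ₃ * y k t + z k 0 + 2 * y 0 t) := by
  obtain ⟨hδ1, hδ2, hδ3, hδ4, hδ5, hδ6, hδ7, hδ8⟩ := hδ
  set S : ℝ → ℝ := fun u => y 1 u + y 2 u + y 3 u + y 4 u + y 5 u with hS
  set ck : Fin 6 → ℝ := fun k => if k = 5 then 1 + δ₁ else 1 with hck
  have hck1 : ∀ k, 1 ≤ ck k := by
    intro k
    by_cases h : k = 5
    · simp only [hck, h, if_pos]; linarith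
    · simp only [hck, if_neg h]; linarith
  have hck2 : ∀ k, ck k ≤ 2 := by
    intro k
    by_cases h : k = 5
    · simp only [hck, h, if_pos]; linarith
    · simp only [hck, if_neg h]; linarith
  -- the row identity
  have hrow : ∀ k : Fin 6, 1 ≤ k.1 → ∀ u, 0 ≤ u →
      z k u = z k 0 + b k u - u + ck k * y 0 u + (1-δ₃) * S u + δ₃ * y k u := by
    intro k hk u hu
    have h := heq u hu k
    rw [Fin.sum_univ_six] at h
    have hkval : k = 1 ∨ k = 2 ∨ k = 3 ∨ k = 4 ∨ k = 5 := by
      have h2 := k.2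
      have h3 : k.1 = 1 ∨ k.1 = 2 ∨ k.1 = 3 ∨ k.1 = 4 ∨ k.1 = 5 := by omega
      rcases h3 with h'|h'|h'|h'|h'
      · exact Or.inl (Fin.ext (h'.trans (by rfl)))
      · exact Or.inr (Or.inl (Fin.ext (h'.trans (by rfl))))
      · exact Or.inr (Or.inr (Or.inl (Fin.ext (h'.trans (by rfl)))))
      · exact Or.inr (Or.inr (Or.inr (Or.inl (Fin.ext (h'.trans (by rfl))))))
      · exact Or.inr (Or.inr (Or.inr (Or.inr (Fin.ext (h'.trans (by rfl))))))
    rcases hkval with rfl|rfl|rfl|rfl|rfl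
    · rw [h]
      norm_num [show Rmat δ₁ δ₂ δ₃ δ₄ 1 0 = 1 from rfl, show Rmat δ₁ δ₂ δ₃ δ₄ 1 1 = 1 from rfl,
        show Rmat δ₁ δ₂ δ₃ δ₄ 1 2 = 1-δ₃ from rfl, show Rmat δ₁ δ₂ δ₃ δ₄ 1 3 = 1-δ₃ from rfl,
        show Rmat δ₁ δ₂ δ₃ δ₄ 1 4 = 1-δ₃ from rfl, show Rmat δ₁ δ₂ δ₃ δ₄ 1 5 = 1-δ₃ from rfl,
        hck, hS, show ((1 : Fin 6) = 5) = False from by decide]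
      ring
    · rw [h]
      norm_num [show Rmat δ₁ δ₂ δ₃ δ₄ 2 0 = 1 from rfl, show Rmat δ₁ δ₂ δ₃ δ₄ 2 1 = 1-δ₃ from rfl,
        show Rmat δ₁ δ₂ δ₃ δ₄ 2 2 = 1 from rfl, show Rmat δ₁ δ₂ δ₃ δ₄ 2 3 = 1-δ₃ from rfl,
        show Rmat δ₁ δ₂ δ₃ δ₄ 2 4 = 1-δ₃ from rfl, show Rmat δ₁ δ₂ δ₃ δ₄ 2 5 = 1-δ₃ from rfl,
        hck, hS, show ((2 : Fin 6) = 5) = False from by decide]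
      ring
    · rw [h]
      norm_num [show Rmat δ₁ δ₂ δ₃ δ₄ 3 0 = 1 from rfl, show Rmat δ₁ δ₂ δ₃ δ₄ 3 1 = 1-δ₃ from rfl,
        show Rmat δ₁ δ₂ δ₃ δ₄ 3 2 = 1-δ₃ from rfl, show Rmat δ₁ δ₂ δ₃ δ₄ 3 3 = 1 from rfl,
        show Rmat δ₁ δ₂ δ₃ δ₄ 3 4 = 1-δ₃ from rfl, show Rmat δ₁ δ₂ δ₃ δ₄ 3 5 = 1-δ₃ from rfl,
        hck, hS, show ((3 : Fin 6) = 5) = False from by decide]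
      ring
    · rw [h]
      norm_num [show Rmat δ₁ δ₂ δ₃ δ₄ 4 0 = 1 from rfl, show Rmat δ₁ δ₂ δ₃ δ₄ 4 1 = 1-δ₃ from rfl,
        show Rmat δ₁ δ₂ δ₃ δ₄ 4 2 = 1-δ₃ from rfl, show Rmat δ₁ δ₂ δ₃ δ₄ 4 3 = 1-δ₃ from rfl,
        show Rmat δ₁ δ₂ δ₃ δ₄ 4 4 = 1 from rfl, show Rmat δ₁ δ₂ δ₃ δ₄ 4 5 = 1-δ₃ from rfl,
        hck, hS, show ((4 : Fin 6) = 5) = False from by decide]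
      ring
    · rw [h]
      norm_num [show Rmat δ₁ δ₂ δ₃ δ₄ 5 0 = 1+δ₁ from rfl, show Rmat δ₁ δ₂ δ₃ δ₄ 5 1 = 1-δ₃ from rfl,
        show Rmat δ₁ δ₂ δ₃ δ₄ 5 2 = 1-δ₃ from rfl, show Rmat δ₁ δ₂ δ₃ δ₄ 5 3 = 1-δ₃ from rfl,
        show Rmat δ₁ δ₂ δ₃ δ₄ 5 4 = 1-δ₃ from rfl, show Rmat δ₁ δ₂ δ₃ δ₄ 5 5 = 1 from rfl,
        hck, hS]
      ring
  -- nonnegativity of y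
  have hynn : ∀ k : Fin 6, ∀ u, 0 ≤ u → 0 ≤ y k u := by
    intro k u hu
    have := hmono k (Set.mem_Ici.2 (le_refl 0)) (Set.mem_Ici.2 hu) hu
    rwa [hy0 k] at this
  have hymon : ∀ k : Fin 6, ∀ u v, 0 ≤ u → u ≤ v → y k u ≤ y k v := by
    intro k u v hu huv
    exact hmono k (Set.mem_Ici.2 hu) (Set.mem_Ici.2 (hu.trans huv)) huv
  -- last zero construction
  have hlast : ∀ k : Fin 6, ∃ σ, 0 ≤ σ ∧ σ ≤ t ∧ y k σ = y k t ∧ (z k σ = 0 ∨ σ = 0) := by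
    intro k
    by_cases hy : y k t = 0
    · exact ⟨0, le_refl 0, ht, (hy0 k).trans hy.symm, Or.inr rfl⟩
    · have hyt : 0 < y k t := lt_of_le_of_ne (hynn k t ht) (Ne.symm hy)
      have ht0 : 0 < t := by
        rcases lt_or_eq_of_le ht with h | h
        · exact h
        · exact absurd (by rw [← h]; exact hy0 k) hy
      set A : Set ℝ := Set.Icc 0 t ∩ (z k) ⁻¹' {0} with hA
      have hclosed : IsClosed A := isClosed_Icc.inter (isClosed_singleton.preimage (hzc k))
      have hne : A.Nonempty := by
        obtain ⟨s, hs1, hs2, hs3⟩ := hrefl k 0 t (le_refl 0) ht0 (by rw [hy0 k]; exact hyt)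
        exact ⟨s, ⟨hs1, hs2⟩, hs3⟩
      have hbdd : BddAbove A := ⟨t, fun s hs => hs.1.2⟩
      set σ := sSup A with hσ
      have hσA : σ ∈ A := hclosed.csSup_mem hne hbdd
      refine ⟨σ, hσA.1.1, hσA.1.2, ?_, Or.inl hσA.2⟩
      -- y k σ = y k t
      by_contra hne2
      have hlt : y k σ < y k t :=
        lt_of_le_of_ne (hymon k σ t hσA.1.1 hσA.1.2) hne2
      have hσt : σ < t := by
        rcases lt_or_eq_of_le hσA.1.2 with h | h
        · exact h
        · exact absurd (congrArg (y k) h) hne2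
      have hopen : IsOpen {s : ℝ | y k s < y k t} := isOpen_lt (hyc k) continuous_const
      obtain ⟨ε, hε, hball⟩ := Metric.isOpen_iff.1 hopen σ hlt
      set t₁ := min (σ + ε/2) ((σ+t)/2) with ht₁
      have hσt₁ : σ < t₁ := lt_min (by linarith) (by linarith)
      have ht₁t : t₁ < t := lt_of_le_of_lt (min_le_right _ _) (by linarith)
      have ht₁0 : 0 ≤ t₁ := le_of_lt (lt_of_le_of_lt hσA.1.1 hσt₁)
      have hy₁ : y k t₁ < y k t := by
        apply hball
        rw [Metric.mem_ball, Real.dist_eq, abs_of_pos (by linarith : 0 < t₁ - σ)]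
        have : t₁ ≤ σ + ε/2 := min_le_left _ _
        linarith
      obtain ⟨s, hs1, hs2, hs3⟩ := hrefl k t₁ t ht₁0 ht₁t hy₁
      have hsA : s ∈ A := ⟨⟨le_trans ht₁0 hs1, hs2⟩, hs3⟩
      have : s ≤ σ := le_csSup hbdd hsA
      linarith
  choose σ hσ0 hσt hσy hσz using hlast
  -- max over K
  have hKex : ∃ m : Fin 6, 1 ≤ m.1 ∧ ∀ j : Fin 6, 1 ≤ j.1 → σ j ≤ σ m := by
    classical
    set K : Finset (Fin 6) := Finset.univ.filter (fun j : Fin 6 => 1 ≤ j.1) with hK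
    have hKne : K.Nonempty := ⟨1, by
      rw [hK]
      simp only [Finset.mem_filter, Finset.mem_univ, true_and]
      decide⟩
    obtain ⟨m, hmK, hmax⟩ := Finset.exists_max_image K σ hKne
    refine ⟨m, by simpa [hK] using hmK, fun j hj => hmax j (by simpa [hK] using hj)⟩
  obtain ⟨m, hm, hmax⟩ := hKex
  -- S (σ m) = S t
  have hyfix : ∀ j : Fin 6, 1 ≤ j.1 → y j (σ m) = y j t := by
    intro j hj
    have h1 : y j (σ m) ≤ y j t := hymon j (σ m) t (hσ0 m) (hσt m)
    have h2 : y j t ≤ y j (σ m) := by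
      rw [← hσy j]
      exact hymon j (σ j) (σ m) (hσ0 j) (hmax j hj)
    linarith
  have hSfix : S (σ m) = S t := by
    rw [hS]
    simp only
    rw [hyfix 1 (by decide), hyfix 2 (by decide), hyfix 3 (by decide),
      hyfix 4 (by decide), hyfix 5 (by decide)]
  -- step S1
  have hs1 : ∀ k : Fin 6, 1 ≤ k.1 →
      (1-δ₃) * S (σ k) + δ₃ * y k t ≤ σ k + c := by
    intro k hk
    have h := hrow k hk (σ k) (hσ0 k)
    have hzle : z k (σ k) ≤ z k 0 := by
      rcases hσz k with h' | h'
      · rw [h']; exact hznn k 0 (le_refl 0)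
      · rw [h']
    have hbb := hb k (σ k) (hσ0 k) (hσt k)
    rw [abs_le] at hbb
    have hy0nn : 0 ≤ y 0 (σ k) := hynn 0 (σ k) (hσ0 k)
    have hprod : 0 ≤ ck k * y 0 (σ k) := mul_nonneg (by linarith [hck1 k]) hy0nn
    rw [hσy k] at h
    linarith [h, hbb.1, hprod, hzle]
  -- step S2
  have hs2 : ∀ k : Fin 6, 1 ≤ k.1 →
      (1-δ₃) * (S t - S (σ k)) ≤ (t - σ k) + 2*c := by
    intro k hk
    have hσkm : σ k ≤ σ m := hmax k hk
    have e1 := hrow m hm (σ m) (hσ0 m)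
    have e2 := hrow m hm (σ k) (hσ0 k)
    have hzmk : z m (σ m) ≤ z m (σ k) := by
      rcases hσz m with h' | h'
      · rw [h']; exact hznn m (σ k) (hσ0 k)
      · have hk0 : σ k = 0 := le_antisymm (h' ▸ hσkm) (hσ0 k)
        rw [h', hk0]
    have hb1 := hb m (σ m) (hσ0 m) (hσt m)
    have hb2 := hb m (σ k) (hσ0 k) (hσt k)
    rw [abs_le] at hb1 hb2
    have hyinc : y 0 (σ k) ≤ y 0 (σ m) := hymon 0 (σ k) (σ m) (hσ0 k) hσkm
    have hyminc : y m (σ k) ≤ y m (σ m) := hymon m (σ k) (σ m) (hσ0 k) hσkm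
    have hprod : 0 ≤ ck m * (y 0 (σ m) - y 0 (σ k)) :=
      mul_nonneg (by linarith [hck1 m]) (by linarith)
    have hSm := hSfix
    -- from e1 - e2
    have hcomb : ck m * y 0 (σ m) - ck m * y 0 (σ k) = ck m * (y 0 (σ m) - y 0 (σ k)) := by ring
    nlinarith [e1, e2, hzmk, hb1.1, hb1.2, hb2.1, hb2.2, hprod, hyminc, hσt m, hSm]
  -- (A)
  have hA : ∀ k : Fin 6, 1 ≤ k.1 →
      (1-δ₃) * S t + δ₃ * y k t ≤ t + 3*c := by
    intro k hk
    have := hs1 k hk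
    have := hs2 k hk
    linarith
  have hSt : S t = y 1 t + y 2 t + y 3 t + y 4 t + y 5 t := by rw [hS]
  constructor
  · intro k hk
    have := hA k hk
    rw [hSt] at this
    exact this
  -- (B)
  · intro k hk
    have hsum : (5 - 4*δ₃) * S t ≤ 5*t + 15*c := by
      have h1 := hA 1 (by decide)
      have h2 := hA 2 (by decide)
      have h3 := hA 3 (by decide)
      have h4 := hA 4 (by decide)
      have h5 := hA 5 (by decide)
      have hexp : δ₃ * y 1 t + δ₃ * y 2 t + δ₃ * y 3 t + δ₃ * y 4 t + δ₃ * y 5 t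
          = δ₃ * S t := by rw [hSt]; ring
      linarith
    have hrowt := hrow k hk t ht
    have hz := hznn k t ht
    have hbt := hb k t (le_refl 0 |>.trans ht) (le_refl t)
    rw [abs_le] at hbt
    have hy0t : 0 ≤ y 0 t := hynn 0 t ht
    have hprod : ck k * y 0 t ≤ 2 * y 0 t :=
      mul_le_mul_of_nonneg_right (hck2 k) hy0t
    -- key algebraic step
    have hD : (0:ℝ) < 5 - 4*δ₃ := by linarith
    have hmul : (1-δ₃) * ((5 - 4*δ₃) * S t) ≤ (1-δ₃) * (5*t + 15*c) :=
      mul_le_mul_of_nonneg_left hsum (by linarith)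
    have hstep1 : t - c - (1-δ₃) * S t ≤ δ₃ * y k t + z k 0 + 2 * y 0 t := by
      linarith only [hrowt, hz, hbt.2, hprod]
    have hq : (1-δ₃) * (5*t + 15*c)
        ≤ (5 - 4*δ₃) * (t - δ₃*t/5 - 4*δ₃^2*t/25 + 4*c) := by
      have h1 : 0 ≤ 16*δ₃^3*t/25 := by positivity
      have h2 : 0 ≤ (5 - δ₃)*c := mul_nonneg (by linarith) hc
      linarith only [h1, h2]
    have hA3 : (1-δ₃) * S t ≤ t - δ₃*t/5 - 4*δ₃^2*t/25 + 4*c := by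
      have h1 : (5 - 4*δ₃) * ((1-δ₃) * S t)
          ≤ (5 - 4*δ₃) * (t - δ₃*t/5 - 4*δ₃^2*t/25 + 4*c) := by
        calc (5 - 4*δ₃) * ((1-δ₃) * S t) = (1-δ₃) * ((5 - 4*δ₃) * S t) := by ring
          _ ≤ (1-δ₃) * (5*t + 15*c) := hmul
          _ ≤ (5 - 4*δ₃) * (t - δ₃*t/5 - 4*δ₃^2*t/25 + 4*c) := hq
      exact le_of_mul_le_mul_left h1 hD
    have hfin : δ₃ * t/5 + 4*δ₃^2/25*t - 5*c ≤ t - c - (1-δ₃) * S t := by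
      linarith only [hA3]
    exact le_trans hfin hstep1


end Stmt8Aux

/-- Sharper bounds on `Y_k`, `k = 2,…,6` (indices `1,…,5`), where `N₆ = Y₁` and
`N_k = 0` otherwise. -/
theorem stmt_8 (δ₁ δ₂ δ₃ δ₄ : ℝ) (hδ : DeltaCond δ₁ δ₂ δ₃ δ₄)
    {Ω : Type} [MeasurableSpace Ω] (P : Measure Ω) [IsProbabilityMeasure P]
    (B Z Y : Fin 6 → ℝ → Ω → ℝ) (hSRBM : IsSRBM δ₁ δ₂ δ₃ δ₄ P B Z Y)
    (N : Fin 6 → ℝ → Ω → ℝ)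
    (hN : N = fun k t ω => if k = 5 then Y 0 t ω else 0) :
    (∀ ε : ℝ, 0 < ε → ∃ C₁ > (0 : ℝ), ∃ ε' > (0 : ℝ),
      ∀ t : ℝ, 0 ≤ t → ∀ k : Fin 6, 1 ≤ k.1 →
        P {ω | (1 + ε) * t + δ₁ * N k t ω ≤ Y k t ω +
            (1 - δ₃) * ∑ ℓ ∈ Finset.univ.filter (fun ℓ : Fin 6 => 1 ≤ ℓ.1 ∧ ℓ ≠ k), Y ℓ t ω} ≤
          ENNReal.ofReal (C₁ * Real.exp (-ε' * t))) ∧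
    (∃ C₁ > (0 : ℝ), ∃ ε' > (0 : ℝ),
      ∀ t : ℝ, 0 ≤ t → ∀ k : Fin 6, 1 ≤ k.1 →
        P {ω | Y k t ω ≤ t / 5 - (1 / δ₃) * (Z k 0 ω + 2 * Y 0 t ω)} ≤
          ENNReal.ofReal (C₁ * Real.exp (-ε' * t))) := by
  classical
  obtain ⟨hBM, hBindep, hZmeas, hYmeas, hZcont, hYcont, hae⟩ := hSRBM
  obtain ⟨hδ1, hδ2, hδ3, hδ4, hδ5, hδ6, hδ7, hδ8⟩ := hδ
  set Qp : Ω → Prop := fun ω =>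
    (∀ t, 0 ≤ t → ∀ k, Z k t ω =
        Z k 0 ω + B k t ω + (-1) * t + ∑ j, Rmat δ₁ δ₂ δ₃ δ₄ k j * Y j t ω) ∧
    (∀ k, Y k 0 ω = 0) ∧
    (∀ k, MonotoneOn (fun t => Y k t ω) (Set.Ici (0 : ℝ))) ∧
    (∀ k t₁ t₂, 0 ≤ t₁ → t₁ < t₂ → Y k t₁ ω < Y k t₂ ω →
        ∃ s, t₁ ≤ s ∧ s ≤ t₂ ∧ Z k s ω = 0) ∧
    (∀ k t, 0 ≤ t → 0 ≤ Z k t ω) with hQp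
  have hQ0 : P {ω | Qp ω}ᶜ = 0 := by
    rw [Set.compl_setOf]
    exact ae_iff.1 hae
  have hpath : ∀ ω, Qp ω → ∀ (t c : ℝ), 0 ≤ t → 0 ≤ c →
      (∀ ℓ : Fin 6, ∀ s, 0 ≤ s → s ≤ t → |B ℓ s ω| ≤ c) →
      (∀ k : Fin 6, 1 ≤ k.1 →
        (1 - δ₃) * (Y 1 t ω + Y 2 t ω + Y 3 t ω + Y 4 t ω + Y 5 t ω)
          + δ₃ * Y k t ω ≤ t + 3*c) ∧
      (∀ k : Fin 6, 1 ≤ k.1 →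
        δ₃ * t/5 + (4*δ₃^2/25)*t - 5*c ≤ δ₃ * Y k t ω + Z k 0 ω + 2 * Y 0 t ω) := by
    intro ω hQω t c ht hc hb
    obtain ⟨q1, q2, q3, q4, q5⟩ := hQω
    exact pathwise δ₁ δ₂ δ₃ δ₄ ⟨hδ1, hδ2, hδ3, hδ4, hδ5, hδ6, hδ7, hδ8⟩
      (fun j u => Z j u ω) (fun j u => Y j u ω) (fun j u => B j u ω)
      (fun j => hZcont j ω) (fun j => hYcont j ω) q1 q2 q3 q4 q5 t c ht hc hb
  have hY0nn : ∀ ω, Qp ω → ∀ t, 0 ≤ t → 0 ≤ Y 0 t ω := by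
    intro ω hQω t ht
    have hm := hQω.2.2.1 0 (Set.mem_Ici.2 (le_refl (0:ℝ))) (Set.mem_Ici.2 ht) ht
    have h0 := hQω.2.1 0
    simp only at hm
    rw [h0] at hm
    exact hm
  constructor
  · -- part (i)
    intro ε hε
    refine ⟨24 * Real.sqrt 2 + 1, by positivity, ε^2/64, by positivity, ?_⟩
    intro t ht k hk
    rcases lt_or_eq_of_le ht with ht0 | ht0
    · set a := ε * t / 4 with haa
      have ha : 0 < a := by positivity
      have hEsub : ∀ ω ∈ ({ω | (1 + ε) * t + δ₁ * N k t ω ≤ Y k t ω +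
            (1 - δ₃) * ∑ ℓ ∈ Finset.univ.filter (fun ℓ : Fin 6 => 1 ≤ ℓ.1 ∧ ℓ ≠ k), Y ℓ t ω}
              : Set Ω) ∩ {ω | Qp ω},
          ∃ ℓ : Fin 6, ∃ q : ℚ, 0 ≤ (q:ℝ) ∧ (q:ℝ) ≤ t ∧ a < |B ℓ (q:ℝ) ω| := by
        rintro ω ⟨hωE, hωQ⟩
        rw [Set.mem_setOf_eq] at hωE hωQ
        by_contra hno
        push_neg at hno
        have hball : ∀ ℓ : Fin 6, ∀ s, 0 ≤ s → s ≤ t → |B ℓ s ω| ≤ a := by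
          intro ℓ
          exact rat_bound_to_all ((hBM ℓ).2.1 ω) ht0 (fun q hq1 hq2 => hno ℓ q hq1 hq2)
        obtain ⟨hA, -⟩ := hpath ω hωQ t a ht ha.le hball
        have hAk := hA k hk
        rw [filter_sum_eq k hk (fun ℓ => Y ℓ t ω)] at hωE
        have hNval : N k t ω = if k = 5 then Y 0 t ω else 0 := by rw [hN]
        have hNnn : 0 ≤ N k t ω := by
          rw [hNval]
          split_ifs
          · exact hY0nn ω hωQ t ht
          · exact le_refl 0
        have hδN : 0 ≤ δ₁ * N k t ω := mul_nonneg hδ1.le hNnn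
        rw [haa] at hAk
        nlinarith [hωE, hAk, hδN, mul_pos hε ht0]
      refine le_trans (master_bound P B hBM {ω | Qp ω} hQ0 _ ht0 ha hEsub) ?_
      have hexp : -(a^2) / (4*t) = -(ε^2/64) * t := by
        rw [haa]
        field_simp
        ring
      rw [hexp]
      apply ENNReal.ofReal_le_ofReal
      have h24 : (24:ℝ) * Real.sqrt 2 ≤ 24 * Real.sqrt 2 + 1 := by linarith
      exact mul_le_mul_of_nonneg_right h24 (Real.exp_pos _).le
    · -- t = 0
      refine le_trans prob_le_one ?_
      rw [← ht0]
      rw [mul_zero, Real.exp_zero, mul_one]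
      refine ENNReal.one_le_ofReal.2 ?_
      nlinarith [Real.sqrt_nonneg 2]
  · -- part (ii)
    refine ⟨24 * Real.sqrt 2 + 1, by positivity, δ₃^4/6400, by positivity, ?_⟩
    intro t ht k hk
    rcases lt_or_eq_of_le ht with ht0 | ht0
    · set a := δ₃^2 * t / 40 with haa
      have ha : 0 < a := by positivity
      have hEsub : ∀ ω ∈ ({ω | Y k t ω ≤ t / 5 - (1 / δ₃) * (Z k 0 ω + 2 * Y 0 t ω)}
              : Set Ω) ∩ {ω | Qp ω},
          ∃ ℓ : Fin 6, ∃ q : ℚ, 0 ≤ (q:ℝ) ∧ (q:ℝ) ≤ t ∧ a < |B ℓ (q:ℝ) ω| := by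
        rintro ω ⟨hωE, hωQ⟩
        rw [Set.mem_setOf_eq] at hωE hωQ
        by_contra hno
        push_neg at hno
        have hball : ∀ ℓ : Fin 6, ∀ s, 0 ≤ s → s ≤ t → |B ℓ s ω| ≤ a := by
          intro ℓ
          exact rat_bound_to_all ((hBM ℓ).2.1 ω) ht0 (fun q hq1 hq2 => hno ℓ q hq1 hq2)
        obtain ⟨-, hB2⟩ := hpath ω hωQ t a ht ha.le hball
        have hBk := hB2 k hk
        have hδne : δ₃ ≠ 0 := ne_of_gt hδ3
        have hrhs : δ₃ * (t / 5 - (1 / δ₃) * (Z k 0 ω + 2 * Y 0 t ω))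
            = δ₃ * t/5 - (Z k 0 ω + 2 * Y 0 t ω) := by
          field_simp
        have hE2 : δ₃ * Y k t ω + (Z k 0 ω + 2 * Y 0 t ω) ≤ δ₃ * t/5 := by
          have h := mul_le_mul_of_nonneg_left hωE hδ3.le
          rw [hrhs] at h
          linarith
        rw [haa] at hBk
        have hpos : 0 < δ₃^2 * t := by positivity
        nlinarith [hBk, hE2, hpos]
      refine le_trans (master_bound P B hBM {ω | Qp ω} hQ0 _ ht0 ha hEsub) ?_
      have hexp : -(a^2) / (4*t) = -(δ₃^4/6400) * t := by
        rw [haa]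
        field_simp
        ring
      rw [hexp]
      apply ENNReal.ofReal_le_ofReal
      have h24 : (24:ℝ) * Real.sqrt 2 ≤ 24 * Real.sqrt 2 + 1 := by linarith
      exact mul_le_mul_of_nonneg_right h24 (Real.exp_pos _).le
    · refine le_trans prob_le_one ?_
      rw [← ht0]
      rw [mul_zero, Real.exp_zero, mul_one]
      refine ENNReal.one_le_ofReal.2 ?_
      nlinarith [Real.sqrt_nonneg 2]
end
end
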